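/- arXiv:1108.2499 — 10 statements merged into one kernel-verified Lean document; each statement's English description precedes it below -/
import Mathlib

section
/- Let (P, ⊴) be a partial order, A ⊆ P a maximal antichain, and A' ⊆ D(A) ∪ A an antichain (where D(A) is the downward closure of A). Then there exists an antichain A'' with A' ⊆ A'' ⊆ D(A) ∪ A such that A'' is a maximal antichain of the whole partial order P. -/
variable {P : Type*} [PartialOrder P]

/-- An antichain: a set of pairwise incomparable elements. -/
def IsAC (A : Set P) : Prop := ∀ i ∈ A, ∀ j ∈ A, ¬ i < j

/-- A maximal antichain: an antichain to which no element can be added. -/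
def IsMaxAC (A : Set P) : Prop := IsAC A ∧ ∀ x ∉ A, ¬ IsAC (insert x A)

/-- The (strict) downward closure of a set. -/
def dcl (A : Set P) : Set P := {i | ∃ j ∈ A, i < j}

/-- The (strict) upward closure of a set. -/
def ucl (A : Set P) : Set P := {i | ∃ j ∈ A, j < i}

/-- Any antichain contained in `D(A) ∪ A`, for `A` a maximal antichain, extends to a
maximal antichain of `P` contained in `D(A) ∪ A`. -/
theorem stmt_1 (A : Set P) (hA : IsMaxAC A) (A' : Set P) (hA' : IsAC A')
    (hsub : A' ⊆ dcl A ∪ A) :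
    ∃ A'' : Set P, A' ⊆ A'' ∧ A'' ⊆ dcl A ∪ A ∧ IsMaxAC A'' := by
  obtain ⟨hAac, hAmax⟩ := hA
  set S : Set (Set P) := {B | B ⊆ dcl A ∪ A ∧ IsAC B} with hS
  have hchain : ∀ c ⊆ S, IsChain (· ⊆ ·) c → c.Nonempty →
      ∃ ub ∈ S, ∀ s ∈ c, s ⊆ ub := by
    intro c hcS hc hne
    refine ⟨⋃₀ c, ⟨?_, ?_⟩, fun s hs => Set.subset_sUnion_of_mem hs⟩
    · intro x hx
      obtain ⟨s, hs, hxs⟩ := hx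
      exact (hcS hs).1 hxs
    · intro i hi j hj hij
      obtain ⟨s, hs, his⟩ := hi
      obtain ⟨t, ht, hjt⟩ := hj
      rcases hc.total hs ht with h | h
      · exact (hcS ht).2 i (h his) j hjt hij
      · exact (hcS hs).2 i his j (h hjt) hij
  obtain ⟨m, hm, hmS, hmmax⟩ := zorn_subset_nonempty S hchain A' ⟨hsub, hA'⟩
  refine ⟨m, hm, hmS.1, hmS.2, ?_⟩
  intro x hxm hxins
  -- x is incomparable to everything in m
  have hincx : ∀ b ∈ m, ¬ b < x ∧ ¬ x < b := by
    intro b hb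
    exact ⟨fun h => hxins b (.inr hb) x (.inl rfl) h,
           fun h => hxins x (.inl rfl) b (.inr hb) h⟩
  -- x ∈ dcl A ∪ A
  have hx : x ∈ dcl A ∪ A := by
    by_cases hxA : x ∈ A
    · exact .inr hxA
    by_contra hxn
    have hnAC := hAmax x hxA
    -- so insert x A is not antichain; extract comparability with some a ∈ A
    have : ∃ a ∈ A, a < x ∨ x < a := by
      by_contra hno
      push_neg at hno
      apply hnAC
      intro i hi j hj hij
      rcases hi with rfl | hi
      · rcases hj with rfl | hj
        · exact lt_irrefl _ hij
        · exact (hno j hj).2 hij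
      · rcases hj with rfl | hj
        · exact (hno i hi).1 hij
        · exact hAac i hi j hj hij
    obtain ⟨a, haA, hax⟩ := this
    rcases hax with hax | hax
    · -- a < x; a must be in m or comparable to m
      have haM : a ∈ m ∨ ∃ b ∈ m, b < a ∨ a < b := by
        by_cases ham : a ∈ m
        · exact .inl ham
        right
        by_contra hno
        push_neg at hno
        have : insert a m ∈ S := by
          refine ⟨Set.insert_subset (.inr haA) hmS.1, ?_⟩
          intro i hi j hj hij
          rcases hi with rfl | hi
          · rcases hj with rfl | hj
            · exact lt_irrefl _ hij
            · exact (hno j hj).2 hij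
          · rcases hj with rfl | hj
            · exact (hno i hi).1 hij
            · exact hmS.2 i hi j hj hij
        have := hmmax this (Set.subset_insert a m)
        exact ham (this (Set.mem_insert a m))
      rcases haM with ham | ⟨b, hbm, hb⟩
      · exact (hincx a ham).1 hax
      rcases hb with hb | hb
      · exact (hincx b hbm).1 (hb.trans hax)
      · -- a < b, b ∈ m ⊆ dcl A ∪ A : contradiction with A antichain
        rcases hmS.1 hbm with hbd | hbA
        · obtain ⟨a', ha', hba'⟩ := hbd
          exact hAac a haA a' ha' (hb.trans hba')
        · exact hAac a haA b hbA hb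
    · -- x < a : x ∈ dcl A
      exact hxn (.inl ⟨a, haA, hax⟩)
  -- now insert x m ∈ S, contradicting maximality
  have : insert x m ∈ S := by
    refine ⟨Set.insert_subset hx hmS.1, ?_⟩
    intro i hi j hj hij
    rcases hi with rfl | hi
    · rcases hj with rfl | hj
      · exact lt_irrefl _ hij
      · exact (hincx j hj).2 hij
    · rcases hj with rfl | hj
      · exact (hincx i hi).1 hij
      · exact hmS.2 i hi j hj hij
  exact hxm ((hmmax this (Set.subset_insert x m)) (Set.mem_insert x m))
end

section
/- Let (P, ⊴) be a finite partial order and A ⊆ P a maximal antichain with nonempty downward closure D(A). Then there exists a maximal antichain A' of P with A' ⊴ A and A' ≠ A, i.e., A' ⊆ D(A) ∪ A and A' strictly below A in the ordering on maximal antichains. -/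
variable {P : Type*} [PartialOrder P]

lemma exists_max_above [Fintype P] (s : Set P) {x : P} (hx : x ∈ s) :
    ∃ m ∈ s, x ≤ m ∧ ∀ y ∈ s, ¬ m < y := by
  have hwf : WellFounded ((· > ·) : P → P → Prop) :=
    (Finite.to_wellFoundedGT (α := P)).wf
  obtain ⟨m, ⟨hms, hxm⟩, hmin⟩ := hwf.has_min {y | y ∈ s ∧ x ≤ y} ⟨x, hx, le_refl x⟩
  exact ⟨m, hms, hxm, fun y hy hlt => hmin y ⟨hy, hxm.trans hlt.le⟩ hlt⟩

/-- In a finite partial order, a maximal antichain with nonempty downward closure has a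
maximal antichain strictly below it. -/
theorem stmt_2 [Fintype P] (A : Set P) (hA : IsMaxAC A) (hD : (dcl A).Nonempty) :
    ∃ A' : Set P, IsMaxAC A' ∧ A' ⊆ dcl A ∪ A ∧ A' ≠ A := by
  obtain ⟨hAC, hMax⟩ := hA
  set M : Set P := {m | m ∈ dcl A ∧ ∀ y ∈ dcl A, ¬ m < y} with hM
  set A' : Set P := M ∪ {a | a ∈ A ∧ ∀ m ∈ M, ¬ m < a} with hA'
  -- dcl A is downward closed
  have hdown : ∀ x ∈ dcl A, ∀ y, y < x → y ∈ dcl A := by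
    rintro x ⟨j, hj, hxj⟩ y hy
    exact ⟨j, hj, hy.trans hxj⟩
  -- elements of dcl A are not in A
  have hdA : ∀ x ∈ dcl A, x ∉ A := by
    rintro x ⟨j, hj, hxj⟩ hxA
    exact hAC x hxA j hj hxj
  -- A' is an antichain
  have hAC' : IsAC A' := by
    rintro i hi j hj hij
    rcases hi with hi | ⟨hiA, hiM⟩ <;> rcases hj with hj | ⟨hjA, hjM⟩
    · exact hi.2 j hj.1 hij
    · exact hjM i hi hij
    · -- i ∈ A, j ∈ M : then i < j ∈ dcl A so i ∈ dcl A, contradiction with i ∈ A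
      exact hdA i (hdown j hj.1 i hij) hiA
    · exact hAC i hiA j hjA hij
  have hMne : M.Nonempty := by
    obtain ⟨x, hx⟩ := hD
    obtain ⟨m, hms, _, hmax⟩ := exists_max_above (dcl A) hx
    exact ⟨m, hms, hmax⟩
  refine ⟨A', ⟨hAC', ?_⟩, ?_, ?_⟩
  · -- maximality
    intro x hx hins
    -- x comparable to some element of A' gives contradiction
    have comp : ∀ z ∈ A', ¬ (x < z ∨ z < x) := by
      rintro z hz (h | h)
      · exact hins x (Set.mem_insert x A') z (Set.mem_insert_of_mem x hz) h
      · exact hins z (Set.mem_insert_of_mem x hz) x (Set.mem_insert x A') h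
    by_cases hxD : x ∈ dcl A
    · obtain ⟨m, hms, hxm, hmax⟩ := exists_max_above (dcl A) hxD
      have hmA' : m ∈ A' := Or.inl ⟨hms, hmax⟩
      rcases lt_or_eq_of_le hxm with h | h
      · exact comp m hmA' (Or.inl h)
      · exact hx (h ▸ hmA')
    by_cases hxA : x ∈ A
    · -- x ∈ A but x ∉ A', so ∃ m ∈ M, m < x
      have : ¬ ∀ m ∈ M, ¬ m < x := fun h => hx (Or.inr ⟨hxA, h⟩)
      push_neg at this
      obtain ⟨m, hm, hmx⟩ := this
      exact comp m (Or.inl hm) (Or.inr hmx)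
    · -- x ∉ dcl A ∪ A: by maximality of A, x comparable with some a ∈ A
      have := hMax x hxA
      unfold IsAC at this
      push_neg at this
      obtain ⟨i, hi, j, hj, hij⟩ := this
      rcases Set.mem_insert_iff.1 hi with rfl | hiA
      · -- x < j, j ∈ A (j ≠ x since x ∉ A... j could be x? j ∈ insert x A)
        rcases Set.mem_insert_iff.1 hj with rfl | hjA
        · exact absurd hij (lt_irrefl _)
        · exact hxD ⟨j, hjA, hij⟩
      · rcases Set.mem_insert_iff.1 hj with rfl | hjA
        · -- i ∈ A, i < x
          by_cases hiA' : ∀ m ∈ M, ¬ m < i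
          · exact comp i (Or.inr ⟨hiA, hiA'⟩) (Or.inr hij)
          · push_neg at hiA'
            obtain ⟨m, hm, hmi⟩ := hiA'
            exact comp m (Or.inl hm) (Or.inr (hmi.trans hij))
        · exact hAC i hiA j hjA hij
  · rintro z (hz | hz)
    · exact Or.inl hz.1
    · exact Or.inr hz.1
  · -- A' ≠ A since some m ∈ M ⊆ dcl A, disjoint from A
    obtain ⟨m, hm⟩ := hMne
    intro heq
    exact hdA m hm.1 (heq ▸ (Or.inl hm : m ∈ A'))
end

section
/- (Dilworth's Theorem) Let n < ω and let (P, ⊴) be a finite partial order such that every antichain A ⊆ P satisfies |A| ≤ n. Then P is the disjoint union of at most n chains. -/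
variable {P : Type*} [PartialOrder P]

def FinAC (t : Finset P) : Prop := ∀ i ∈ t, ∀ j ∈ t, ¬ i < j
def FinCh (t : Finset P) : Prop := ∀ i ∈ t, ∀ j ∈ t, i ≤ j ∨ j ≤ i

lemma chain_top (t : Finset P) (ht : t.Nonempty) (hc : FinCh t) :
    ∃ z ∈ t, ∀ x ∈ t, x ≤ z := by
  obtain ⟨z, hz, hmax⟩ : ∃ z ∈ t, ∀ x ∈ t, ¬ z < x := by
    obtain ⟨z, hz⟩ := Finset.exists_maximal ht
    exact ⟨z, hz.1, fun x hx hlt => hlt.not_ge (hz.2 hx hlt.le)⟩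
  exact ⟨z, hz, fun x hx => by
    rcases hc x hx z hz with h | h
    · exact h
    · rcases eq_or_lt_of_le h with rfl | h'
      · exact le_rfl
      · exact absurd h' (hmax x hx)⟩

lemma core_dilworth [DecidableEq P] :
    ∀ (N : ℕ) (s : Finset P), s.card ≤ N → ∀ n : ℕ,
      (∀ t ⊆ s, FinAC t → t.card ≤ n) →
      ∃ c : Fin n → Finset P, (∀ k, FinCh (c k)) ∧ (∀ k, c k ⊆ s) ∧
        (∀ k l, k ≠ l → Disjoint (c k) (c l)) ∧ ∀ x ∈ s, ∃ k, x ∈ c k := by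
  intro N
  induction N with
  | zero =>
    intro s hs n _
    have : s = ∅ := Finset.card_eq_zero.mp (Nat.le_zero.mp hs)
    subst this
    exact ⟨fun _ => ∅, fun _ => by intro i hi; simp at hi,
      fun _ => by simp, fun _ _ _ => by simp, fun x hx => by simp at hx⟩
  | succ N IH =>
    intro s hs n hn
    classical
    rcases Finset.eq_empty_or_nonempty s with rfl | hne
    · exact ⟨fun _ => ∅, fun _ => by intro i hi; simp at hi,
        fun _ => by simp, fun _ _ _ => by simp, fun x hx => by simp at hx⟩
    obtain ⟨a, ha, hamax⟩ : ∃ a ∈ s, ∀ x ∈ s, ¬ a < x := by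
      obtain ⟨z, hz⟩ := Finset.exists_maximal hne
      exact ⟨z, hz.1, fun x hx hlt => hlt.not_ge (hz.2 hx hlt.le)⟩
    set s' := s.erase a with hs'
    have hs'card : s'.card ≤ N := by
      have h1 : s'.card = s.card - 1 := Finset.card_erase_of_mem ha
      have h2 : 1 ≤ s.card := Finset.card_pos.mpr hne
      omega
    have hs'sub : s' ⊆ s := Finset.erase_subset _ _
    -- m : max antichain size in s'
    set 𝒜 := s'.powerset.filter (fun t => FinAC t) with h𝒜
    have h𝒜ne : 𝒜.Nonempty := ⟨∅, by
      simp [h𝒜, Finset.mem_filter, Finset.empty_subset]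
      intro i hi; simp at hi⟩
    set m := 𝒜.sup Finset.card with hm
    have hach : ∃ t₀, t₀ ⊆ s' ∧ FinAC t₀ ∧ t₀.card = m := by
      obtain ⟨t₀, ht₀, heq⟩ := Finset.exists_mem_eq_sup 𝒜 h𝒜ne Finset.card
      simp [h𝒜, Finset.mem_filter, Finset.mem_powerset] at ht₀
      exact ⟨t₀, ht₀.1, ht₀.2, heq.symm⟩
    obtain ⟨t₀, ht₀s, ht₀ac, ht₀card⟩ := hach
    have hbound : ∀ t ⊆ s', FinAC t → t.card ≤ m := by
      intro t hts hac
      exact Finset.le_sup (by simp [h𝒜, Finset.mem_filter, Finset.mem_powerset, hts, hac])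
    have hmn : m ≤ n := ht₀card ▸ hn t₀ (ht₀s.trans hs'sub) ht₀ac
    obtain ⟨C, hCch, hCsub, hCdisj, hCcov⟩ := IH s' hs'card m hbound
    -- pigeonhole: every m-antichain in s' meets every chain
    have meet : ∀ t ⊆ s', FinAC t → t.card = m → ∀ k : Fin m, ∃ y ∈ C k, y ∈ t := by
      intro t hts hac hcard k
      by_contra hno
      push_neg at hno
      have hsub : t ⊆ Finset.univ.biUnion (fun j : Fin m => t ∩ C j) := by
        intro x hx
        obtain ⟨j, hj⟩ := hCcov x (hts hx)
        exact Finset.mem_biUnion.mpr ⟨j, Finset.mem_univ j, Finset.mem_inter.mpr ⟨hx, hj⟩⟩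
      have hle1 : ∀ j : Fin m, (t ∩ C j).card ≤ 1 := by
        intro j
        refine Finset.card_le_one.mpr ?_
        intro x hx y hy
        simp only [Finset.mem_inter] at hx hy
        rcases hCch j x hx.2 y hy.2 with h | h
        · exact (eq_or_lt_of_le h).resolve_right (hac x hx.1 y hy.1)
        · exact ((eq_or_lt_of_le h).resolve_right (hac y hy.1 x hx.1)).symm
      have hk0 : (t ∩ C k).card = 0 := by
        rw [Finset.card_eq_zero]
        ext y
        simp only [Finset.mem_inter, Finset.notMem_empty, iff_false]
        rintro ⟨hy1, hy2⟩
        exact hno y hy2 hy1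
      have h1 : t.card ≤ ∑ j : Fin m, (t ∩ C j).card :=
        (Finset.card_le_card hsub).trans Finset.card_biUnion_le
      have h2 : ∑ j : Fin m, (t ∩ C j).card < ∑ _j : Fin m, 1 := by
        refine Finset.sum_lt_sum (fun j _ => hle1 j) ⟨k, Finset.mem_univ k, ?_⟩
        omega
      simp at h2
      omega
    -- tops
    have hT : ∀ k : Fin m, ∃ z, (z ∈ C k ∧ ∃ t ⊆ s', FinAC t ∧ t.card = m ∧ z ∈ t) ∧
        ∀ x, (x ∈ C k ∧ ∃ t ⊆ s', FinAC t ∧ t.card = m ∧ x ∈ t) → x ≤ z := by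
      intro k
      set T := (C k).filter (fun x => ∃ t ⊆ s', FinAC t ∧ t.card = m ∧ x ∈ t) with hTdef
      have hTne : T.Nonempty := by
        obtain ⟨y, hyC, hyt⟩ := meet t₀ ht₀s ht₀ac ht₀card k
        exact ⟨y, by simp [hTdef, Finset.mem_filter, hyC]; exact ⟨t₀, ht₀s, ht₀ac, ht₀card, hyt⟩⟩
      have hTch : FinCh T := fun i hi j hj =>
        hCch k i (Finset.mem_filter.mp hi).1 j (Finset.mem_filter.mp hj).1
      obtain ⟨z, hz, hzmax⟩ := chain_top T hTne hTch
      refine ⟨z, ?_, ?_⟩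
      · have := Finset.mem_filter.mp hz
        exact ⟨this.1, this.2⟩
      · intro x hx
        exact hzmax x (Finset.mem_filter.mpr ⟨hx.1, hx.2⟩)
    choose a_ ha_ using hT
    -- a_ k ∈ C k, a_ k ∈ some m-antichain, and top property
    have ha_C : ∀ k, a_ k ∈ C k := fun k => (ha_ k).1.1
    have ha_s' : ∀ k, a_ k ∈ s' := fun k => hCsub k (ha_C k)
    -- A is an antichain
    have hAac : ∀ k l : Fin m, ¬ a_ k < a_ l := by
      intro k l hlt
      by_cases hkl : k = l
      · subst hkl; exact lt_irrefl _ hlt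
      obtain ⟨t, hts, hac, hcard, hmem⟩ := (ha_ l).1.2
      obtain ⟨y, hyC, hyt⟩ := meet t hts hac hcard k
      have hyT : y ≤ a_ k := (ha_ k).2 y ⟨hyC, t, hts, hac, hcard, hyt⟩
      exact hac y hyt (a_ l) hmem (lt_of_le_of_lt hyT hlt)
    by_cases hcase : ∃ k : Fin m, a_ k < a
    · -- Case B
      obtain ⟨k₀, hk₀⟩ := hcase
      have hm1 : 1 ≤ m := by
        have := k₀.2; omega
      set K := insert a ((C k₀).filter (fun x => x ≤ a_ k₀)) with hK
      have haK : a ∈ K := Finset.mem_insert_self _ _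
      have hKs : K ⊆ s := by
        intro x hx
        rcases Finset.mem_insert.mp hx with rfl | hx
        · exact ha
        · exact hs'sub (hCsub k₀ (Finset.mem_filter.mp hx).1)
      have hKch : FinCh K := by
        intro x hx y hy
        rcases Finset.mem_insert.mp hx with rfl | hx <;>
          rcases Finset.mem_insert.mp hy with rfl | hy
        · exact Or.inl le_rfl
        · exact Or.inr (((Finset.mem_filter.mp hy).2.trans hk₀.le))
        · exact Or.inl (((Finset.mem_filter.mp hx).2.trans hk₀.le))
        · exact hCch k₀ x (Finset.mem_filter.mp hx).1 y (Finset.mem_filter.mp hy).1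
      set s'' := s \ K with hs''
      have hs''sub' : s'' ⊆ s' := by
        intro x hx
        simp only [hs'', Finset.mem_sdiff] at hx
        exact Finset.mem_erase.mpr ⟨fun h => hx.2 (h ▸ haK), hx.1⟩
      have hs''card : s''.card ≤ N := by
        have h1 : s'' ⊆ s' := hs''sub'
        have := Finset.card_le_card h1
        omega
      have hb'' : ∀ t ⊆ s'', FinAC t → t.card ≤ m - 1 := by
        intro t hts hac
        have h1 : t.card ≤ m := hbound t (hts.trans hs''sub') hac
        rcases eq_or_lt_of_le h1 with heq | hlt
        · exfalso
          obtain ⟨y, hyC, hyt⟩ := meet t (hts.trans hs''sub') hac heq k₀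
          have hyle : y ≤ a_ k₀ := (ha_ k₀).2 y ⟨hyC, t, hts.trans hs''sub', hac, heq, hyt⟩
          have hyK : y ∈ K := Finset.mem_insert.mpr (Or.inr (Finset.mem_filter.mpr ⟨hyC, hyle⟩))
          have := hts hyt
          simp [hs'', Finset.mem_sdiff] at this
          exact this.2 hyK
        · omega
      obtain ⟨D, hDch, hDsub, hDdisj, hDcov⟩ := IH s'' hs''card (m - 1) hb''
      have hm1n : m - 1 < n := by omega
      refine ⟨fun j => if h : (j : ℕ) < m - 1 then D ⟨j, h⟩ else
        if (j : ℕ) = m - 1 then K else ∅, ?_, ?_, ?_, ?_⟩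
      · intro k
        by_cases h : (k : ℕ) < m - 1
        · simpa [h] using hDch ⟨k, h⟩
        · by_cases h2 : (k : ℕ) = m - 1 <;> simp [h, h2]
          · exact hKch
          · intro i hi; simp at hi
      · intro k
        by_cases h : (k : ℕ) < m - 1
        · simpa [h] using (hDsub ⟨k, h⟩).trans ((hs''sub'.trans hs'sub))
        · by_cases h2 : (k : ℕ) = m - 1 <;> simp [h, h2]
          · exact hKs
      · intro k l hkl
        have hDK : ∀ j, Disjoint (D j) K := by
          intro j
          refine Finset.disjoint_left.mpr fun x hx hxK => ?_
          have := hDsub j hx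
          simp [hs'', Finset.mem_sdiff] at this
          exact this.2 hxK
        by_cases h : (k : ℕ) < m - 1 <;> by_cases h2 : (l : ℕ) < m - 1
        · simp only [h, h2, dif_pos]
          refine hDdisj _ _ ?_
          simp only [ne_eq, Fin.mk.injEq]
          exact fun hh => hkl (Fin.ext hh)
        · by_cases h3 : (l : ℕ) = m - 1 <;> simp [h, h2, h3]
          exact hDK _
        · by_cases h3 : (k : ℕ) = m - 1 <;> simp [h, h2, h3]
          exact (hDK _).symm
        · by_cases h3 : (k : ℕ) = m - 1 <;> by_cases h4 : (l : ℕ) = m - 1 <;>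
            simp [h, h2, h3, h4]
          exact absurd (Fin.ext (h3.trans h4.symm)) hkl
      · intro x hx
        by_cases hxK : x ∈ K
        · refine ⟨⟨m - 1, hm1n⟩, ?_⟩
          simp [hxK]
        · have hx'' : x ∈ s'' := by simp [hs'', Finset.mem_sdiff, hx, hxK]
          obtain ⟨j, hj⟩ := hDcov x hx''
          refine ⟨⟨j, lt_trans j.2 hm1n⟩, ?_⟩
          simp [j.2, hj]
    · -- Case A : insert a (image a_) is an antichain of size m + 1
      push_neg at hcase
      have ha_inj : Function.Injective a_ := by
        intro k l hkl
        by_contra hne'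
        have := hCdisj k l hne'
        exact (Finset.disjoint_left.mp this (ha_C k)) (hkl ▸ ha_C l)
      set A := insert a (Finset.univ.image a_) with hA
      have hAcard : A.card = m + 1 := by
        rw [hA, Finset.card_insert_of_notMem, Finset.card_image_of_injective _ ha_inj,
          Finset.card_univ, Fintype.card_fin]
        intro hmem
        obtain ⟨k, _, hk⟩ := Finset.mem_image.mp hmem
        have := ha_s' k
        rw [hk] at this
        exact (Finset.mem_erase.mp this).1 rfl
      have hAsub : A ⊆ s := by
        intro x hx
        rcases Finset.mem_insert.mp hx with rfl | hx
        · exact ha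
        · obtain ⟨k, _, hk⟩ := Finset.mem_image.mp hx
          exact hs'sub (hk ▸ ha_s' k)
      have hAac' : FinAC A := by
        intro i hi j hj hij
        rcases Finset.mem_insert.mp hi with rfl | hi <;>
          rcases Finset.mem_insert.mp hj with rfl | hj
        · exact lt_irrefl _ hij
        · obtain ⟨k, _, hk⟩ := Finset.mem_image.mp hj
          exact hamax _ (hAsub (Finset.mem_insert_of_mem hj)) hij
        · obtain ⟨k, _, hk⟩ := Finset.mem_image.mp hi
          exact hcase k (hk ▸ hij)
        · obtain ⟨k, _, hk⟩ := Finset.mem_image.mp hi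
          obtain ⟨l, _, hl⟩ := Finset.mem_image.mp hj
          exact hAac k l (by rw [hk, hl]; exact hij)
      have hmn' : m + 1 ≤ n := hAcard ▸ hn A hAsub hAac'
      refine ⟨fun j => if h : (j : ℕ) < m then C ⟨j, h⟩ else
        if (j : ℕ) = m then {a} else ∅, ?_, ?_, ?_, ?_⟩
      · intro k
        by_cases h : (k : ℕ) < m
        · simpa [h] using hCch ⟨k, h⟩
        · by_cases h2 : (k : ℕ) = m <;> simp [h, h2]
          · intro i hi j hj
            simp at hi hj
            subst hi; subst hj; exact Or.inl le_rfl
          · intro i hi; simp at hi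
      · intro k
        by_cases h : (k : ℕ) < m
        · simpa [h] using (hCsub ⟨k, h⟩).trans hs'sub
        · by_cases h2 : (k : ℕ) = m <;> simp [h, h2]
          · exact ha
      · intro k l hkl
        have hCa : ∀ j, a ∉ C j := fun j hx =>
          (Finset.mem_erase.mp (hCsub j hx)).1 rfl
        by_cases h : (k : ℕ) < m <;> by_cases h2 : (l : ℕ) < m
        · simp only [h, h2, dif_pos]
          refine hCdisj _ _ ?_
          simp only [ne_eq, Fin.mk.injEq]
          exact fun hh => hkl (Fin.ext hh)
        · by_cases h3 : (l : ℕ) = m <;> simp [h, h2, h3]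
          exact hCa _
        · by_cases h3 : (k : ℕ) = m <;> simp [h, h2, h3]
          exact hCa _
        · by_cases h3 : (k : ℕ) = m <;> by_cases h4 : (l : ℕ) = m <;>
            simp [h, h2, h3, h4]
          exact absurd (Fin.ext (h3.trans h4.symm)) hkl
      · intro x hx
        by_cases hxa : x = a
        · refine ⟨⟨m, hmn'⟩, ?_⟩
          simp [hxa]
        · have hx' : x ∈ s' := Finset.mem_erase.mpr ⟨hxa, hx⟩
          obtain ⟨j, hj⟩ := hCcov x hx'
          refine ⟨⟨j, lt_of_lt_of_le j.2 (by omega)⟩, ?_⟩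
          simp [j.2, hj]


/-- Dilworth's theorem: a finite partial order all of whose antichains have size at most
`n` is a disjoint union of at most `n` chains. -/
theorem stmt_4 [Fintype P] (n : ℕ) (h : ∀ A : Set P, IsAC A → A.ncard ≤ n) :
    ∃ c : Fin n → Set P, (∀ k, IsChain (· ≤ ·) (c k)) ∧
      (∀ k l, k ≠ l → Disjoint (c k) (c l)) ∧ (⋃ k, c k) = Set.univ := by
  classical
  have hb : ∀ t ⊆ (Finset.univ : Finset P), FinAC t → t.card ≤ n := by
    intro t _ hac
    have := h ↑t (fun i hi j hj => hac i hi j hj)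
    rwa [Set.ncard_coe_finset] at this
  obtain ⟨c, hch, _, hdisj, hcov⟩ :=
    core_dilworth (Fintype.card P) Finset.univ le_rfl n hb
  -- disjointify by taking least index
  refine ⟨fun k => ↑(c k) \ ⋃ l : Fin n, ⋃ _ : l < k, ↑(c l), ?_, ?_, ?_⟩
  · intro k x hx y hy hxy
    rcases hch k x hx.1 y hy.1 with h' | h'
    · exact Or.inl h'
    · exact Or.inr h'
  · intro k l hkl
    rcases lt_or_gt_of_ne hkl with hlt | hlt
    · refine Set.disjoint_left.mpr fun x hx hy => ?_
      exact hy.2 (Set.mem_iUnion.mpr ⟨k, Set.mem_iUnion.mpr ⟨hlt, hx.1⟩⟩)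
    · refine Set.disjoint_left.mpr fun x hx hy => ?_
      exact hx.2 (Set.mem_iUnion.mpr ⟨l, Set.mem_iUnion.mpr ⟨hlt, hy.1⟩⟩)
  · ext x
    simp only [Set.mem_iUnion, Set.mem_univ, iff_true]
    have hne : (Finset.univ.filter (fun k : Fin n => x ∈ c k)).Nonempty := by
      obtain ⟨k, hk⟩ := hcov x (Finset.mem_univ x)
      exact ⟨k, Finset.mem_filter.mpr ⟨Finset.mem_univ k, hk⟩⟩
    set F := Finset.univ.filter (fun k : Fin n => x ∈ c k) with hF
    refine ⟨F.min' hne, ?_⟩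
    constructor
    · exact (Finset.mem_filter.mp (F.min'_mem hne)).2
    · intro hmem
      obtain ⟨l, hl⟩ := Set.mem_iUnion.mp hmem
      obtain ⟨hlt, hxl⟩ := Set.mem_iUnion.mp hl
      have : F.min' hne ≤ l := F.min'_le l (Finset.mem_filter.mpr ⟨Finset.mem_univ l, hxl⟩)
      exact absurd hlt (not_lt.mpr this)
end

section
/- Let (P, ⊴) be a finite partial order, f an N-indiscernible coloring, t ∈ {0,1}, and C ⊆ f⁻¹(t) a chain. Then there exist elements i₀ ⊴ i'₀ ⊴ i₁ ⊴ i'₁ ⊴ ... ⊴ i_K ⊴ i'_K of C with K ≤ N such that C ⊆ ⋃_{n ≤ K} [i_n, i'_n]_P ⊆ f⁻¹(t), where [i, i']_P = {j ∈ P : i ⊴ j ⊴ i'}. -/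
variable {P : Type*} [PartialOrder P]

/-- An `N`-indiscernible coloring: every antichain has at most `N` elements of one of the
two colors, and no chain alternates colors more than `2N+1` times. -/
def IsIndiscColoring (N : ℕ) (f : P → ZMod 2) : Prop :=
  (∀ A : Set P, IsAC A → ∃ t : ZMod 2, (A ∩ f ⁻¹' {t}).ncard ≤ N) ∧
  ¬ ∃ g : ℕ → P, (∀ ℓ < 2 * N + 1, g ℓ < g (ℓ + 1)) ∧
      (∀ ℓ < 2 * N + 1, f (g ℓ) ≠ f (g (ℓ + 1)))

theorem aux_cover [Fintype P] (f : P → ZMod 2) (t : ZMod 2) :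
    ∀ m : ℕ, ∀ C : Set P, C.ncard ≤ m → IsChain (· ≤ ·) C → C ⊆ f ⁻¹' {t} → C.Nonempty →
    ∃ K : ℕ, ∃ a b x : ℕ → P,
      (∀ c ∈ C, a 0 ≤ c) ∧
      (∀ n ≤ K, a n ∈ C ∧ b n ∈ C ∧ a n ≤ b n) ∧
      (∀ n < K, b n < a (n + 1)) ∧
      (∀ n < K, a n ≤ x n ∧ x n ≤ a (n + 1) ∧ f (x n) ≠ t) ∧
      C ⊆ (⋃ n ∈ Set.Iic K, Set.Icc (a n) (b n)) ∧
      (⋃ n ∈ Set.Iic K, Set.Icc (a n) (b n)) ⊆ f ⁻¹' {t} := by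
  intro m
  induction m with
  | zero =>
    intro C hcard hchain hCt hne
    exfalso
    rw [Nat.le_zero, Set.ncard_eq_zero C.toFinite] at hcard
    exact hne.ne_empty hcard
  | succ m ih =>
    intro C hcard hchain hCt hne
    obtain ⟨a0, ha0C, ha0min⟩ := Set.Finite.exists_minimalFor id C C.toFinite hne
    have hleast : ∀ c ∈ C, a0 ≤ c := by
      intro c hc
      rcases eq_or_ne c a0 with rfl | hne'
      · exact le_refl _
      · rcases hchain ha0C hc (Ne.symm hne') with h | h
        · exact h
        · have h2 : a0 = c := le_antisymm (ha0min hc h) h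
          exact le_of_eq h2
    set B : Set P := {c ∈ C | Set.Icc a0 c ⊆ f ⁻¹' {t}} with hB
    have ha0B : a0 ∈ B := by
      refine ⟨ha0C, ?_⟩
      intro y hy
      have : y = a0 := le_antisymm hy.2 hy.1
      subst this
      exact hCt ha0C
    obtain ⟨b0, hb0B, hb0max⟩ := Set.Finite.exists_maximalFor id B B.toFinite ⟨a0, ha0B⟩
    have hb0C : b0 ∈ C := hb0B.1
    have ha0b0 : a0 ≤ b0 := hleast b0 hb0C
    set C' : Set P := {c ∈ C | b0 < c} with hC'
    have hsplit : ∀ c ∈ C, c ≤ b0 ∨ c ∈ C' := by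
      intro c hc
      rcases eq_or_ne c b0 with rfl | hne'
      · exact Or.inl le_rfl
      · rcases hchain hc hb0C hne' with h | h
        · exact Or.inl h
        · exact Or.inr ⟨hc, lt_of_le_of_ne h (Ne.symm hne')⟩
    by_cases hC'ne : C'.Nonempty
    · -- recursive case
      have hsub : C' ⊂ C := by
        constructor
        · intro c hc; exact hc.1
        · intro hcon
          have := (hcon ha0C).2
          exact absurd (lt_of_le_of_lt ha0b0 this) (lt_irrefl a0)
      have hcard' : C'.ncard ≤ m := by
        have := Set.ncard_lt_ncard hsub C.toFinite
        omega
      obtain ⟨K', a', b', x', hleast', hmem', hord', hx', hcov', hsub'⟩ :=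
        ih C' hcard' (hchain.mono hsub.subset) (fun c hc => hCt hc.1) hC'ne
      -- bad element between a0 and a' 0
      have ha'0 : a' 0 ∈ C' := (hmem' 0 (Nat.zero_le _)).1
      have hbad : ∃ y, a0 ≤ y ∧ y ≤ a' 0 ∧ f y ≠ t := by
        by_contra hcon
        push_neg at hcon
        have ha'0B : a' 0 ∈ B := by
          refine ⟨ha'0.1, ?_⟩
          intro y hy
          exact hcon y hy.1 hy.2
        have h2 : b0 = a' 0 := le_antisymm (le_of_lt ha'0.2) (hb0max ha'0B (le_of_lt ha'0.2))
        exact absurd ha'0.2 (h2 ▸ lt_irrefl b0)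
      obtain ⟨x0, hx01, hx02, hx03⟩ := hbad
      refine ⟨K' + 1, (fun n => match n with | 0 => a0 | n+1 => a' n),
        (fun n => match n with | 0 => b0 | n+1 => b' n),
        (fun n => match n with | 0 => x0 | n+1 => x' n), ?_, ?_, ?_, ?_, ?_, ?_⟩
      · exact hleast
      · intro n hn
        match n with
        | 0 => exact ⟨ha0C, hb0C, ha0b0⟩
        | n+1 =>
          obtain ⟨h1, h2, h3⟩ := hmem' n (by omega)
          exact ⟨h1.1, h2.1, h3⟩
      · intro n hn
        match n with
        | 0 => exact ha'0.2
        | n+1 => exact hord' n (by omega)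
      · intro n hn
        match n with
        | 0 => exact ⟨hx01, hx02, hx03⟩
        | n+1 => exact hx' n (by omega)
      · intro c hc
        rcases hsplit c hc with h | h
        · simp only [Set.mem_iUnion, Set.mem_Iic]
          exact ⟨0, Nat.zero_le _, hleast c hc, h⟩
        · have := hcov' h
          simp only [Set.mem_iUnion, Set.mem_Iic] at this ⊢
          obtain ⟨n, hn, hmem⟩ := this
          exact ⟨n + 1, by omega, hmem⟩
      · intro y hy
        simp only [Set.mem_iUnion, Set.mem_Iic] at hy
        obtain ⟨n, hn, hmem⟩ := hy
        match n with
        | 0 => exact hb0B.2 hmem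
        | n+1 =>
          apply hsub'
          simp only [Set.mem_iUnion, Set.mem_Iic]
          exact ⟨n, by omega, hmem⟩
    · -- base case: C' empty
      refine ⟨0, (fun _ => a0), (fun _ => b0), (fun _ => a0), hleast, ?_, ?_, ?_, ?_, ?_⟩
      · intro n _; exact ⟨ha0C, hb0C, ha0b0⟩
      · intro n hn; omega
      · intro n hn; omega
      · intro c hc
        rcases hsplit c hc with h | h
        · simp only [Set.mem_iUnion, Set.mem_Iic]
          exact ⟨0, le_rfl, hleast c hc, h⟩
        · exact absurd ⟨c, h⟩ hC'ne
      · intro y hy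
        simp only [Set.mem_iUnion, Set.mem_Iic] at hy
        obtain ⟨n, _, hmem⟩ := hy
        exact hb0B.2 hmem

/-- A (nonempty) chain `C ⊆ f⁻¹(t)` is covered by at most `N+1` closed intervals
`[i_n, i'_n]` with endpoints in `C`, all contained in `f⁻¹(t)`. -/
theorem stmt_8 [Fintype P] (N : ℕ) (f : P → ZMod 2) (hf : IsIndiscColoring N f)
    (t : ZMod 2) (C : Set P) (hC : IsChain (· ≤ ·) C) (hCt : C ⊆ f ⁻¹' {t})
    (hne : C.Nonempty) :
    ∃ K ≤ N, ∃ a b : ℕ → P,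
      (∀ n ≤ K, a n ∈ C ∧ b n ∈ C ∧ a n ≤ b n) ∧
      (∀ n < K, b n ≤ a (n + 1)) ∧
      C ⊆ (⋃ n ∈ Set.Iic K, Set.Icc (a n) (b n)) ∧
      (⋃ n ∈ Set.Iic K, Set.Icc (a n) (b n)) ⊆ f ⁻¹' {t} := by
  obtain ⟨K, a, b, x, hleast, hmem, hord, hx, hcov, hsub⟩ :=
    aux_cover f t C.ncard C le_rfl hC hCt hne
  have hft : ∀ n ≤ K, f (a n) = t := fun n hn => hCt (hmem n hn).1
  have hKN : K ≤ N := by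
    by_contra hK
    push_neg at hK
    apply hf.2
    refine ⟨fun ℓ => if Even ℓ then a (ℓ / 2) else x (ℓ / 2), ?_, ?_⟩
    · intro ℓ hℓ
      rcases Nat.even_or_odd ℓ with ⟨n, hn⟩ | ⟨n, hn⟩
      · subst hn
        have he : Even (n + n) := ⟨n, rfl⟩
        have ho : ¬ Even (n + n + 1) := by simp [Nat.even_add_one, he]
        have h1 : (n + n) / 2 = n := by omega
        have h2 : (n + n + 1) / 2 = n := by omega
        simp only [if_pos he, if_neg ho, h1, h2]
        have hnK : n < K := by omega
        obtain ⟨hx1, _, hx3⟩ := hx n hnK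
        exact lt_of_le_of_ne hx1 (fun h => hx3 (h ▸ (hft n (le_of_lt hnK)).symm ▸ (hft n (le_of_lt hnK))))
      · subst hn
        have ho : ¬ Even (2 * n + 1) := by simp [Nat.even_add_one]
        have he : Even (2 * n + 1 + 1) := by refine ⟨n + 1, ?_⟩; omega
        have h1 : (2 * n + 1) / 2 = n := by omega
        have h2 : (2 * n + 1 + 1) / 2 = n + 1 := by omega
        simp only [if_neg ho, if_pos he, h1, h2]
        have hnK : n < K := by omega
        obtain ⟨_, hx2, hx3⟩ := hx n hnK
        refine lt_of_le_of_ne hx2 (fun h => hx3 ?_)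
        rw [h, hft (n + 1) (by omega)]
    · intro ℓ hℓ
      rcases Nat.even_or_odd ℓ with ⟨n, hn⟩ | ⟨n, hn⟩
      · subst hn
        have he : Even (n + n) := ⟨n, rfl⟩
        have ho : ¬ Even (n + n + 1) := by simp [Nat.even_add_one, he]
        have h1 : (n + n) / 2 = n := by omega
        have h2 : (n + n + 1) / 2 = n := by omega
        simp only [if_pos he, if_neg ho, h1, h2]
        have hnK : n < K := by omega
        rw [hft n (le_of_lt hnK)]
        exact fun h => (hx n hnK).2.2 h.symm
      · subst hn
        have ho : ¬ Even (2 * n + 1) := by simp [Nat.even_add_one]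
        have he : Even (2 * n + 1 + 1) := by refine ⟨n + 1, ?_⟩; omega
        have h1 : (2 * n + 1) / 2 = n := by omega
        have h2 : (2 * n + 1 + 1) / 2 = n + 1 := by omega
        simp only [if_neg ho, if_pos he, h1, h2]
        have hnK : n < K := by omega
        rw [hft (n + 1) (by omega)]
        exact (hx n hnK).2.2
  exact ⟨K, hKN, a, b, hmem, fun n hn => le_of_lt (hord n hn), hcov, hsub⟩
end

section
/- Let (P, ⊴) be a finite partial order, f an N-indiscernible coloring, A ⊆ P a maximal antichain, and t ∈ {0,1} with |{i ∈ A : f(i) = 1−t}| ≤ N. Then there exist A₀ ⊆ A with |A₀| ≤ 2N+1, and sets J⁻, J⁺ ⊆ f⁻¹(1−t) each of size ≤ N, such that for all j ∈ f⁻¹(1−t): (i) j ◁ A iff (j ◁ A₀ or j ⊴ J⁻), and (ii) A ◁ j iff (A₀ ◁ j or J⁺ ⊴ j). -/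
variable {P : Type*} [PartialOrder P]

/-- In a finite type, every element of a set lies below a maximal element of the set. -/
lemma exists_maximal_above {Q : Type*} [PartialOrder Q] [Fintype Q] {S : Set Q} {j : Q}
    (hj : j ∈ S) : ∃ m ∈ S, j ≤ m ∧ ∀ m' ∈ S, ¬ m < m' := by
  obtain ⟨m, hm, hmax⟩ := Set.Finite.exists_maximalFor id {x ∈ S | j ≤ x}
    (Set.toFinite _) ⟨j, hj, le_refl j⟩
  exact ⟨m, hm.1, hm.2, fun m' hm' hlt =>
    absurd (hmax ⟨hm', le_trans hm.2 hlt.le⟩ hlt.le) (fun h => lt_irrefl _ (lt_of_lt_of_le hlt h))⟩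

/-- In a finite type, every element of a set lies above a minimal element of the set. -/
lemma exists_minimal_below {Q : Type*} [PartialOrder Q] [Fintype Q] {S : Set Q} {j : Q}
    (hj : j ∈ S) : ∃ m ∈ S, m ≤ j ∧ ∀ m' ∈ S, ¬ m' < m :=
  exists_maximal_above (Q := Qᵒᵈ) hj

/-- Counting lemma: if `V ∪ W` is an antichain with `V` of color `t` and size `N+1`
and `W` of color `1 - t`, then `W` has at most `N` elements. -/
lemma count_bound {Q : Type*} [PartialOrder Q] [Fintype Q] {N : ℕ} {f : Q → ZMod 2}
    (hf : ∀ A : Set Q, IsAC A → ∃ t : ZMod 2, (A ∩ f ⁻¹' {t}).ncard ≤ N)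
    {t : ZMod 2} {V W : Set Q} (hV : ∀ i ∈ V, f i = t) (hW : ∀ m ∈ W, f m = 1 - t)
    (hVcard : V.ncard = N + 1) (hAC : IsAC (V ∪ W)) : W.ncard ≤ N := by
  obtain ⟨t₀, ht₀⟩ := hf (V ∪ W) hAC
  have hcase : ∀ x y : ZMod 2, x = y ∨ x = 1 - y := by decide
  have hne : ∀ y : ZMod 2, 1 - y ≠ y := by decide
  rcases hcase t₀ t with rfl | rfl
  · exfalso
    have hsub : V ⊆ (V ∪ W) ∩ f ⁻¹' {t₀} := fun i hi => ⟨Or.inl hi, hV i hi⟩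
    have := Set.ncard_le_ncard hsub (Set.toFinite _)
    omega
  · have hsub : W ⊆ (V ∪ W) ∩ f ⁻¹' {1 - t} := fun m hm => ⟨Or.inr hm, hW m hm⟩
    exact le_trans (Set.ncard_le_ncard hsub (Set.toFinite _)) ht₀

/-- The antichain-fixing lemma: for a maximal antichain `A` whose minority color `1−t`
occurs at most `N` times, there are `A₀ ⊆ A` of size `≤ 2N+1` and sets `J⁻, J⁺` of
`(1−t)`-colored points of size `≤ N` deciding the relation of every `(1−t)`-colored point
to `A`. -/
theorem stmt_9 [Fintype P] (N : ℕ) (f : P → ZMod 2) (hf : IsIndiscColoring N f)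
    (A : Set P) (hA : IsMaxAC A) (t : ZMod 2)
    (hmin : (A ∩ f ⁻¹' {1 - t}).ncard ≤ N) :
    ∃ A₀ ⊆ A, A₀.ncard ≤ 2 * N + 1 ∧
      ∃ Jm ⊆ f ⁻¹' {1 - t}, Jm.ncard ≤ N ∧
        ∃ Jp ⊆ f ⁻¹' {1 - t}, Jp.ncard ≤ N ∧
          ∀ j ∈ f ⁻¹' {1 - t},
            ((∃ i ∈ A, j < i) ↔ ((∃ i ∈ A₀, j < i) ∨ ∃ j' ∈ Jm, j ≤ j')) ∧
            ((∃ i ∈ A, i < j) ↔ ((∃ i ∈ A₀, i < j) ∨ ∃ j' ∈ Jp, j' ≤ j)) := by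
  classical
  have hAac : IsAC A := hA.1
  by_cases hbig : N + 1 ≤ (A ∩ f ⁻¹' {t}).ncard
  · -- Big case: pick V ⊆ A of color t with |V| = N + 1.
    obtain ⟨V, hVsub, hVcard⟩ := Set.exists_subset_card_eq hbig
    set A₀ : Set P := (A ∩ f ⁻¹' {1 - t}) ∪ V with hA₀
    have hA₀A : A₀ ⊆ A := by
      rintro x (hx | hx)
      · exact hx.1
      · exact (hVsub hx).1
    have hVt : ∀ i ∈ V, f i = t := fun i hi => (hVsub hi).2
    have hVA₀ : V ⊆ A₀ := fun i hi => Or.inr hi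
    -- S: minority points below A ; Sp: minority points above A
    set S : Set P := {j | f j = 1 - t ∧ ∃ i ∈ A, j < i} with hS
    set Sp : Set P := {j | f j = 1 - t ∧ ∃ i ∈ A, i < j} with hSp
    set Jm : Set P := {m | m ∈ S ∧ (∀ m' ∈ S, ¬ m < m') ∧ ¬ ∃ i ∈ A₀, m < i} with hJm
    set Jp : Set P := {m | m ∈ Sp ∧ (∀ m' ∈ Sp, ¬ m' < m) ∧ ¬ ∃ i ∈ A₀, i < m} with hJp
    have hJmS : Jm ⊆ S := fun m hm => hm.1
    have hJpS : Jp ⊆ Sp := fun m hm => hm.1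
    refine ⟨A₀, hA₀A, ?_, Jm, fun m hm => hm.1.1, ?_, Jp, fun m hm => hm.1.1, ?_, ?_⟩
    · calc A₀.ncard ≤ (A ∩ f ⁻¹' {1 - t}).ncard + V.ncard := Set.ncard_union_le _ _
        _ ≤ 2 * N + 1 := by omega
    · -- |Jm| ≤ N
      refine count_bound hf.1 hVt (fun m hm => hm.1.1) hVcard ?_
      rintro x (hx | hx) y (hy | hy) hlt
      · exact hAac x (hVsub hx).1 y (hVsub hy).1 hlt
      · -- x ∈ V ⊆ A, y ∈ Jm so y < i'' ∈ A, x < y < i'' contradicts IsAC A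
        obtain ⟨i'', hi'', hyi⟩ := hy.1.2
        exact hAac x (hVsub hx).1 i'' hi'' (hlt.trans hyi)
      · -- x ∈ Jm, y ∈ V ⊆ A₀ : contradicts x escaping A₀
        exact hx.2.2 ⟨y, hVA₀ hy, hlt⟩
      · exact hx.2.1 y hy.1 hlt
    · -- |Jp| ≤ N
      refine count_bound hf.1 hVt (fun m hm => hm.1.1) hVcard ?_
      rintro x (hx | hx) y (hy | hy) hlt
      · exact hAac x (hVsub hx).1 y (hVsub hy).1 hlt
      · exact hy.2.2 ⟨x, hVA₀ hx, hlt⟩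
      · obtain ⟨i'', hi'', hix⟩ := hx.1.2
        exact hAac i'' hi'' y (hVsub hy).1 (hix.trans hlt)
      · exact hy.2.1 x hx.1 hlt
    · intro j hj
      constructor
      · constructor
        · rintro ⟨i, hi, hji⟩
          obtain ⟨m, hmS, hjm, hmax⟩ := exists_maximal_above (S := S) ⟨hj, i, hi, hji⟩
          by_cases hesc : ∃ i ∈ A₀, m < i
          · obtain ⟨i', hi', hmi'⟩ := hesc
            exact Or.inl ⟨i', hi', lt_of_le_of_lt hjm hmi'⟩
          · exact Or.inr ⟨m, ⟨hmS, hmax, hesc⟩, hjm⟩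
        · rintro (⟨i, hi, hji⟩ | ⟨j', hj', hjj'⟩)
          · exact ⟨i, hA₀A hi, hji⟩
          · obtain ⟨i, hi, hj'i⟩ := (hJmS hj').2
            exact ⟨i, hi, lt_of_le_of_lt hjj' hj'i⟩
      · constructor
        · rintro ⟨i, hi, hij⟩
          obtain ⟨m, hmS, hmj, hmin'⟩ := exists_minimal_below (S := Sp) ⟨hj, i, hi, hij⟩
          by_cases hesc : ∃ i ∈ A₀, i < m
          · obtain ⟨i', hi', hi'm⟩ := hesc
            exact Or.inl ⟨i', hi', lt_of_lt_of_le hi'm hmj⟩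
          · exact Or.inr ⟨m, ⟨hmS, hmin', hesc⟩, hmj⟩
        · rintro (⟨i, hi, hij⟩ | ⟨j', hj', hj'j⟩)
          · exact ⟨i, hA₀A hi, hij⟩
          · obtain ⟨i, hi, hij'⟩ := (hJpS hj').2
            exact ⟨i, hi, lt_of_lt_of_le hij' hj'j⟩
  · -- Small case: A itself has at most 2N+1 elements; take A₀ = A, Jm = Jp = ∅.
    have hAcard : A.ncard ≤ 2 * N + 1 := by
      have hcover : A ⊆ (A ∩ f ⁻¹' {t}) ∪ (A ∩ f ⁻¹' {1 - t}) := by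
        intro a ha
        have : f a = t ∨ f a = 1 - t := by
          have : ∀ x y : ZMod 2, x = y ∨ x = 1 - y := by decide
          exact this (f a) t
        rcases this with h | h
        · exact Or.inl ⟨ha, h⟩
        · exact Or.inr ⟨ha, h⟩
      calc A.ncard ≤ ((A ∩ f ⁻¹' {t}) ∪ (A ∩ f ⁻¹' {1 - t})).ncard :=
            Set.ncard_le_ncard hcover (Set.toFinite _)
        _ ≤ (A ∩ f ⁻¹' {t}).ncard + (A ∩ f ⁻¹' {1 - t}).ncard := Set.ncard_union_le _ _
        _ ≤ 2 * N + 1 := by omega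
    refine ⟨A, le_refl A, hAcard, ∅, Set.empty_subset _, by simp, ∅, Set.empty_subset _,
      by simp, fun j hj => ⟨?_, ?_⟩⟩ <;> simp
end

section
/- Let φ(x̄;ȳ) be a partitioned formula with the independence property (i.e., not dependent). Then there do NOT exist natural numbers N, K, L and formulas ψ_ℓ(ȳ; z̄₀,...,z̄_K) for ℓ < L such that for all finite partial orders (P,⊴), all Δ_{N,φ}-indiscernible sequences ⟨b̄_i : i ∈ P⟩, and all φ-types p over {b̄_i : i ∈ P}, there are ℓ < L and i₀,...,i_K ∈ P with: for all j ∈ P, φ(x̄;b̄_j) ∈ p iff ⊨ ψ_ℓ(b̄_j; b̄_{i₀},...,b̄_{i_K}). (Key counting step: if φ is independent, then for every m there is a linearly ordered Δ_{N,φ}-indiscernible sequence of length m whose underlying set is φ-independent, giving 2^m many φ-types, while uniform definitions give at most L·m^K types; since 2^m > L·m^K for large m, no uniform definition exists.) -/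
open FirstOrder

variable {L : Language} {M : Type*} [L.Structure M] {α β : Type*}

/-- A finite family of `lg(ȳ)`-tuples is `φ`-independent: every Boolean pattern on it is
realized by an instance of `φ`. -/
def PhiIndep (φ : L.Formula (α ⊕ β)) (B : Finset (β → M)) : Prop :=
  ∀ s : (β → M) → Bool, ∃ a : α → M, ∀ b ∈ B,
    (φ.Realize (Sum.elim a b) ↔ s b = true)

/-- `⟨b i : i ∈ P⟩` is `Δ_{N,φ}`-indiscernible with respect to the partial order `P`:
tuples of distinct indices with the same quantifier-free order type satisfy the same
formulas `∃x̄ ⋀_{k ≤ N} φ(x̄; z̄_k)^{s(k)}`. -/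
def DeltaIndisc (N : ℕ) (φ : L.Formula (α ⊕ β)) {P : Type*} [PartialOrder P]
    (b : P → β → M) : Prop :=
  ∀ i j : Fin (N + 1) → P, Function.Injective i → Function.Injective j →
    (∀ k l, i k ≤ i l ↔ j k ≤ j l) →
    ∀ s : Fin (N + 1) → Bool,
      ((∃ a : α → M, ∀ k, (φ.Realize (Sum.elim a (b (i k))) ↔ s k = true)) ↔
        (∃ a : α → M, ∀ k, (φ.Realize (Sum.elim a (b (j k))) ↔ s k = true)))

/-- Exponential growth beats polynomial growth (with a constant). -/
lemma exists_two_pow_gt (c k : ℕ) : ∃ m : ℕ, c * m ^ k < 2 ^ m := by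
  have h := isLittleO_pow_const_const_pow_of_one_lt (R := ℝ) k (one_lt_two)
  have hc : (0:ℝ) < 1 / (c + 1) := by positivity
  have h2 := ((h.def hc).and (Filter.eventually_ge_atTop 1)).exists
  obtain ⟨m, hm, hm1⟩ := h2
  refine ⟨m, ?_⟩
  have hm' : ‖((m:ℝ))^k‖ ≤ 1 / (c+1) * ‖(2:ℝ)^m‖ := hm
  rw [Real.norm_eq_abs, Real.norm_eq_abs, abs_of_nonneg (by positivity),
    abs_of_nonneg (by positivity)] at hm'
  have hcast : (c:ℝ) * (m:ℝ)^k < (2:ℝ)^m := by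
    have h1 : ((c:ℝ)+1) * (m:ℝ)^k ≤ (2:ℝ)^m := by
      rw [div_mul_eq_mul_div, one_mul, le_div_iff₀ (by positivity)] at hm'
      linarith [hm']
    have h1m : (1:ℝ) ≤ (m:ℝ) := by exact_mod_cast hm1
    have hmk : (1:ℝ) ≤ (m:ℝ) ^ k := by
      calc (1:ℝ) = 1 ^ k := (one_pow k).symm
        _ ≤ (m:ℝ) ^ k := pow_le_pow_left₀ zero_le_one h1m k
    nlinarith [hmk]
  have := hcast
  push_cast at this
  exact_mod_cast this


/-- A copy of `Fin m` carrying the *discrete* partial order. -/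
def DiscFin (m : ℕ) : Type := Fin m

def DiscFin.toFin {m : ℕ} (x : DiscFin m) : Fin m := x

instance (m : ℕ) : Fintype (DiscFin m) := inferInstanceAs (Fintype (Fin m))

instance (m : ℕ) : PartialOrder (DiscFin m) where
  le a b := a = b
  le_refl _ := rfl
  le_trans _ _ _ h1 h2 := Eq.trans h1 h2
  le_antisymm _ _ h1 _ := h1

lemma DiscFin.toFin_injective {m : ℕ} : Function.Injective (DiscFin.toFin (m := m)) :=
  fun _ _ h => h

lemma DiscFin.card (m : ℕ) : Fintype.card (DiscFin m) = m := Fintype.card_fin m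

/-- If `φ` has the independence property (arbitrarily large `φ`-independent sets), then
there is no uniform definition of `φ`-types over finite partial order
`Δ_{N,φ}`-indiscernibles: no finite list of formulas `ψ_ℓ(ȳ; z̄₀, ..., z̄_K)` defines,
with parameters from the sequence, every `φ`-type over every finite
`Δ_{N,φ}`-indiscernible sequence. -/
theorem stmt_12 (φ : L.Formula (α ⊕ β))
    (hIP : ∀ m : ℕ, ∃ B : Finset (β → M), B.card = m ∧ PhiIndep φ B) :
    ¬ ∃ (N K Lc : ℕ) (ψ : Fin Lc → L.Formula (β ⊕ (Fin (K + 1) × β))),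
      ∀ (P : Type) (_ : Fintype P) (_ : PartialOrder P) (b : P → β → M),
        DeltaIndisc N φ b →
        ∀ s : P → Bool,
          (∃ a : α → M, ∀ i, (φ.Realize (Sum.elim a (b i)) ↔ s i = true)) →
          ∃ (ℓ : Fin Lc) (idx : Fin (K + 1) → P), ∀ j : P,
            (s j = true ↔
              (ψ ℓ).Realize (Sum.elim (b j) (fun q => b (idx q.1) q.2))) := by
  classical
  rintro ⟨N, K, Lc, ψ, h⟩
  obtain ⟨m, hmlt⟩ := exists_two_pow_gt Lc (K + 1)
  obtain ⟨B, hBcard, hBindep⟩ := hIP m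
  let eqv : { x // x ∈ B } ≃ Fin m := B.equivFinOfCardEq hBcard
  let e : Fin m → (β → M) := fun i => (eqv.symm i : β → M)
  have he_inj : Function.Injective e :=
    fun i j hij => eqv.symm.injective (Subtype.val_injective hij)
  have he_mem : ∀ i, e i ∈ B := fun i => (eqv.symm i).2
  let P : Type := DiscFin m
  let b : P → β → M := fun i => e i.toFin
  have hbinj : Function.Injective b :=
    fun i j hij => DiscFin.toFin_injective (he_inj hij)
  -- every pattern on any injective tuple from P is realized
  have tup : ∀ (n : ℕ) (i : Fin n → P), Function.Injective i →
      ∀ s : Fin n → Bool, ∃ a : α → M, ∀ k,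
        (φ.Realize (Sum.elim a (b (i k))) ↔ s k = true) := by
    intro n i hi s
    set s' : (β → M) → Bool := fun v => if h : ∃ k, b (i k) = v then s h.choose else false
      with hs'
    obtain ⟨a, ha⟩ := hBindep s'
    refine ⟨a, fun k => ?_⟩
    have hmem : b (i k) ∈ B := he_mem _
    rw [ha _ hmem]
    have hh : ∃ k', b (i k') = b (i k) := ⟨k, rfl⟩
    have hck : hh.choose = k := hi (hbinj hh.choose_spec)
    rw [hs']
    simp only [dif_pos hh, hck]
  have hind : DeltaIndisc N φ b := by
    intro i j hi hj _ s
    exact iff_of_true (tup _ i hi s) (tup _ j hj s)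
  -- every boolean pattern on P is a realized φ-type
  have hreal : ∀ s : P → Bool, ∃ a : α → M,
      ∀ i, (φ.Realize (Sum.elim a (b i)) ↔ s i = true) := by
    intro s
    set s' : (β → M) → Bool := fun v => if h : ∃ i, b i = v then s h.choose else false
      with hs'
    obtain ⟨a, ha⟩ := hBindep s'
    refine ⟨a, fun i => ?_⟩
    rw [ha _ (he_mem _)]
    have hh : ∃ i', b i' = b i := ⟨i, rfl⟩
    have hci : hh.choose = i := hbinj hh.choose_spec
    rw [hs']
    simp only [dif_pos hh, hci]
    rw [dif_pos (show ∃ i_1, b i_1 = e (DiscFin.toFin i) from hh)]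
  -- choice of definitions for each type
  have key : ∀ s : P → Bool, ∃ (ℓ : Fin Lc) (idx : Fin (K + 1) → P), ∀ j : P,
      (s j = true ↔ (ψ ℓ).Realize (Sum.elim (b j) (fun q => b (idx q.1) q.2))) :=
    fun s => h P inferInstance inferInstance b hind s (hreal s)
  choose f g hf using key
  have hinj : Function.Injective (fun s : P → Bool => (f s, g s)) := by
    intro s t hst
    simp only [Prod.mk.injEq] at hst
    obtain ⟨e1, e2⟩ := hst
    funext j
    have h1 := hf s j
    have h2 := hf t j
    rw [e1, e2] at h1
    have h3 := h1.trans h2.symm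
    cases hs : s j <;> cases ht : t j <;> simp [hs, ht] at h3 ⊢
  have hcard := Fintype.card_le_of_injective _ hinj
  rw [Fintype.card_prod, Fintype.card_fun, Fintype.card_fun, Fintype.card_bool,
    Fintype.card_fin, Fintype.card_fin] at hcard
  rw [show Fintype.card P = m from DiscFin.card m] at hcard
  exact absurd hcard (not_le.mpr hmlt)
end

section
/- Let (P, ⊴) be a finite partial order and suppose every antichain of P has size at most M, where M = (2N+1)(N+1). Then P can be written as a union of at most M chains, and consequently for any coloring f : P → {0,1} that is constant equal to t on P, the set P is 'roughly definable' as a union of at most M(N+1) closed intervals of P when f is an N-indiscernible coloring of a larger poset containing P with P ⊆ f⁻¹(t). Concretely: if Q is a finite poset, f an N-indiscernible coloring of Q, t ∈ {0,1}, and P ⊆ f⁻¹(t) has all antichains of size ≤ M, then P ⊆ ⋃ of at most M(N+1) closed intervals [i, i']_Q each contained in f⁻¹(t). -/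
variable {P : Type*} [PartialOrder P]

lemma chain_greatest {C : Set P} (hC : IsChain (· ≤ ·) C) (hne : C.Nonempty)
    (hfin : C.Finite) : ∃ g ∈ C, ∀ x ∈ C, x ≤ g := by
  obtain ⟨g, hg, hmax⟩ := Set.Finite.exists_maximalFor id C hfin hne
  refine ⟨g, hg, fun x hx => ?_⟩
  rcases eq_or_ne x g with rfl | hxg
  · exact le_refl _
  rcases hC hx hg hxg with h | h
  · exact h
  · exact hmax hx h

lemma chain_least {C : Set P} (hC : IsChain (· ≤ ·) C) (hne : C.Nonempty)
    (hfin : C.Finite) : ∃ g ∈ C, ∀ x ∈ C, g ≤ x := by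
  obtain ⟨g, hg, hmin⟩ := Set.Finite.exists_minimalFor id C hfin hne
  refine ⟨g, hg, fun x hx => ?_⟩
  rcases eq_or_ne x g with rfl | hxg
  · exact le_refl _
  rcases hC hx hg hxg with h | h
  · exact hmin hx h
  · exact h

lemma pad_chains (S : Set P) {k M : ℕ} (hkM : k ≤ M) (c : Fin k → Set P)
    (hchain : ∀ m, IsChain (· ≤ ·) (c m)) (hsub : ∀ m, c m ⊆ S)
    (hdisj : ∀ m m', m ≠ m' → Disjoint (c m) (c m')) (hcover : S = ⋃ m, c m) :
    ∃ c' : Fin M → Set P, (∀ m, IsChain (· ≤ ·) (c' m)) ∧ (∀ m, c' m ⊆ S) ∧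
      (∀ m m', m ≠ m' → Disjoint (c' m) (c' m')) ∧ S = ⋃ m, c' m := by
  refine ⟨fun m => if h : (m : ℕ) < k then c ⟨m, h⟩ else ∅, fun m => ?_, fun m => ?_,
    fun m m' hmm => ?_, ?_⟩
  · dsimp only; split
    · exact hchain _
    · exact Set.Subsingleton.isChain (by simp)
  · dsimp only; split
    · exact hsub _
    · exact Set.empty_subset _
  · show Disjoint (if h : (m : ℕ) < k then c ⟨m, h⟩ else ∅)
      (if h : (m' : ℕ) < k then c ⟨m', h⟩ else ∅)
    split <;> split
    · exact hdisj _ _ (by simp only [ne_eq, Fin.mk.injEq]; exact fun h => hmm (Fin.ext h))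
    · exact disjoint_bot_right
    · exact disjoint_bot_left
    · exact disjoint_bot_left
  · ext x
    simp only [Set.mem_iUnion, hcover]
    constructor
    · rintro ⟨i, hi⟩
      exact ⟨⟨i, lt_of_lt_of_le i.2 hkM⟩, by simp [i.2, hi]⟩
    · rintro ⟨i, hi⟩
      simp only [Set.mem_dite_empty_right] at hi
      exact ⟨_, hi.2⟩

lemma dilworth [Fintype P] : ∀ (n : ℕ) (S : Set P), S.ncard ≤ n →
    ∀ M : ℕ, (∀ A ⊆ S, IsAC A → A.ncard ≤ M) →
    ∃ c : Fin M → Set P, (∀ m, IsChain (· ≤ ·) (c m)) ∧ (∀ m, c m ⊆ S) ∧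
      (∀ m m', m ≠ m' → Disjoint (c m) (c m')) ∧ S = ⋃ m, c m := by
  intro n
  induction n with
  | zero =>
    intro S hcard M _
    have hS : S = ∅ := by
      rw [← Set.ncard_eq_zero (Set.toFinite S)]; omega
    refine ⟨fun _ => ∅, fun _ => Set.Subsingleton.isChain (by simp),
      fun _ => Set.empty_subset _, fun _ _ _ => disjoint_bot_left, ?_⟩
    simp [hS]
  | succ n IH =>
    intro S hcard M hanti
    rcases S.eq_empty_or_nonempty with rfl | hSne
    · refine ⟨fun _ => ∅, fun _ => Set.Subsingleton.isChain (by simp),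
        fun _ => Set.empty_subset _, fun _ _ _ => disjoint_bot_left, by simp⟩
    -- pick a maximal element a of S
    obtain ⟨a, haS, hamax⟩ := Set.Finite.exists_maximalFor id S (Set.toFinite S) hSne
    set S' : Set P := S \ {a} with hS'def
    have hS'S : S' ⊆ S := Set.diff_subset
    have hS'card : S'.ncard ≤ n := by
      have h2 := Set.ncard_diff_singleton_lt_of_mem haS (Set.toFinite S)
      rw [← hS'def] at h2
      omega
    -- the width k of S'
    set W : Set ℕ := {j | ∃ A, A ⊆ S' ∧ IsAC A ∧ A.ncard = j} with hWdef
    have hW0 : 0 ∈ W := ⟨∅, Set.empty_subset _, fun i hi => hi.elim, Set.ncard_empty _⟩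
    have hWbdd : ∀ j ∈ W, j ≤ M := by
      rintro j ⟨A, hAS, hAC, rfl⟩
      exact hanti A (hAS.trans hS'S) hAC
    set k : ℕ := sSup W with hkdef
    have hkmem : k ∈ W := Nat.sSup_mem ⟨0, hW0⟩ ⟨M, fun j hj => hWbdd j hj⟩
    obtain ⟨A0, hA0S, hA0AC, hA0card⟩ := hkmem
    have hkM : k ≤ M := hWbdd k ⟨A0, hA0S, hA0AC, hA0card⟩
    have hle : ∀ A ⊆ S', IsAC A → A.ncard ≤ k :=
      fun A hAS hAC => le_csSup ⟨M, fun j hj => hWbdd j hj⟩ ⟨A, hAS, hAC, rfl⟩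
    obtain ⟨C, hCchain, hCsub, hCdisj, hCcover⟩ := IH S' hS'card k hle
    -- every k-antichain of S' meets every chain C i
    have hit : ∀ A, A ⊆ S' → IsAC A → A.ncard = k → ∀ i : Fin k, ∃ x ∈ A, x ∈ C i := by
      intro A hAS hAAC hAcard i
      have hx : ∀ x : A, ∃ j : Fin k, (x : P) ∈ C j := by
        intro x
        have hxS' : (x : P) ∈ ⋃ j, C j := hCcover ▸ hAS x.2
        simpa using hxS'
      choose φ hφ using hx
      have hinj : Function.Injective φ := by
        intro x y hxy
        by_contra hne
        have hvne : (x : P) ≠ (y : P) := fun h => hne (Subtype.ext h)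
        have hcomp := hCchain (φ x) (hφ x) (hxy ▸ hφ y) hvne
        rcases hcomp with h | h
        · exact hAAC x x.2 y y.2 (lt_of_le_of_ne h hvne)
        · exact hAAC y y.2 x x.2 (lt_of_le_of_ne h hvne.symm)
      haveI : Fintype ↥A := Fintype.ofFinite _
      have hcardA : Fintype.card ↥A = k := by
        rw [← Nat.card_eq_fintype_card, Nat.card_coe_set_eq, hAcard]
      have hbij : Function.Bijective φ :=
        (Fintype.bijective_iff_injective_and_card φ).2 ⟨hinj, by simp [hcardA]⟩
      obtain ⟨x, hx⟩ := hbij.2 i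
      exact ⟨x, x.2, hx ▸ hφ x⟩
    -- top elements of chains among k-antichain members
    set D : Fin k → Set P := fun i =>
      {x | x ∈ C i ∧ ∃ A, A ⊆ S' ∧ IsAC A ∧ A.ncard = k ∧ x ∈ A} with hDdef
    have hDne : ∀ i, (D i).Nonempty := by
      intro i
      obtain ⟨x, hxA, hxC⟩ := hit A0 hA0S hA0AC hA0card i
      exact ⟨x, hxC, A0, hA0S, hA0AC, hA0card, hxA⟩
    have hDchain : ∀ i, IsChain (· ≤ ·) (D i) :=
      fun i => (hCchain i).mono (fun x hx => hx.1)
    have hamaxex : ∀ i, ∃ g ∈ D i, ∀ x ∈ D i, x ≤ g :=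
      fun i => chain_greatest (hDchain i) (hDne i) (Set.toFinite _)
    choose amax hamaxD hamaxtop using hamaxex
    have hamaxC : ∀ i, amax i ∈ C i := fun i => (hamaxD i).1
    have hamaxS' : ∀ i, amax i ∈ S' := fun i => hCsub i (hamaxC i)
    have hnot_a_le : ∀ i, ¬ a ≤ amax i := by
      intro i hle'
      have h2 : a = amax i := le_antisymm hle' (hamax (hS'S (hamaxS' i)) hle')
      exact (hamaxS' i).2 (by simp only [Set.mem_singleton_iff]; exact h2.symm)
    have hkey : ∀ i j, ¬ amax i < amax j := by
      intro i j hlt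
      obtain ⟨-, A, hAS, hAAC, hAcard, hmemA⟩ := hamaxD j
      obtain ⟨x, hxA, hxC⟩ := hit A hAS hAAC hAcard i
      have hxD : x ∈ D i := ⟨hxC, A, hAS, hAAC, hAcard, hxA⟩
      have hxle : x ≤ amax i := hamaxtop i x hxD
      exact hAAC x hxA (amax j) hmemA (lt_of_le_of_lt hxle hlt)
    by_cases hcase : ∃ i, amax i ≤ a
    · -- Case A: remove the chain K through amax i and a
      obtain ⟨i, hia⟩ := hcase
      have hkne : k ≠ 0 := fun h => (h ▸ i).elim0
      set K : Set P := insert a {x | x ∈ C i ∧ x ≤ amax i} with hKdef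
      have haK : a ∈ K := Set.mem_insert _ _
      have hKS : K ⊆ S := by
        rintro x (rfl | ⟨hxC, -⟩)
        · exact haS
        · exact hS'S (hCsub i hxC)
      have hKchain : IsChain (· ≤ ·) K := by
        rintro x (rfl | ⟨hxC, hxle⟩) y (rfl | ⟨hyC, hyle⟩) hne
        · exact absurd rfl hne
        · exact Or.inr (hyle.trans hia)
        · exact Or.inl (hxle.trans hia)
        · exact hCchain i hxC hyC hne
      have hSK_anti : ∀ B ⊆ S \ K, IsAC B → B.ncard ≤ k - 1 := by
        intro B hBS hBAC
        by_contra hgt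
        push_neg at hgt
        have hkB : k ≤ B.ncard := by
          have h3 := Nat.succ_le_of_lt hgt
          rwa [show (k - 1).succ = k from Nat.succ_pred_eq_of_ne_zero hkne] at h3
        obtain ⟨B', hB'B, hB'card⟩ := Set.exists_subset_card_eq hkB
        have hB'S' : B' ⊆ S' := by
          intro x hx
          refine ⟨(hBS (hB'B hx)).1, ?_⟩
          intro hxa
          exact (hBS (hB'B hx)).2 (by rw [Set.mem_singleton_iff] at hxa; rw [hxa]; exact haK)
        obtain ⟨x, hxB', hxC⟩ := hit B' hB'S' (fun p hp q hq => hBAC p (hB'B hp) q (hB'B hq))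
          hB'card i
        have hxD : x ∈ D i := ⟨hxC, B', hB'S', fun p hp q hq => hBAC p (hB'B hp) q (hB'B hq),
          hB'card, hxB'⟩
        have : x ∈ K := Set.mem_insert_iff.2 (Or.inr ⟨hxC, hamaxtop i x hxD⟩)
        exact (hBS (hB'B hxB')).2 this
      have hSKcard : (S \ K).ncard ≤ n := by
        have hsub : S \ K ⊆ S' := fun x hx => ⟨hx.1, fun h => hx.2 (by
          rw [Set.mem_singleton_iff] at h; rw [h]; exact haK)⟩
        exact le_trans (Set.ncard_le_ncard hsub (Set.toFinite _)) hS'card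
      obtain ⟨c', hc'chain, hc'sub, hc'disj, hc'cover⟩ := IH (S \ K) hSKcard (k - 1) hSK_anti
      refine pad_chains S (show k - 1 + 1 ≤ M by omega) (Fin.cons K c') ?_ ?_ ?_ ?_
      · intro m
        refine Fin.cases ?_ ?_ m
        · simpa using hKchain
        · intro j; simpa using hc'chain j
      · intro m
        refine Fin.cases ?_ ?_ m
        · simpa using hKS
        · intro j; simpa using (hc'sub j).trans Set.diff_subset
      · intro m m' hne
        have hdisjK : ∀ j, Disjoint K (c' j) := by
          intro j
          rw [Set.disjoint_right]
          intro x hx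
          exact (hc'sub j hx).2
        rcases Fin.eq_zero_or_eq_succ m with rfl | ⟨j, rfl⟩ <;>
          rcases Fin.eq_zero_or_eq_succ m' with rfl | ⟨j', rfl⟩
        · exact absurd rfl hne
        · simpa using hdisjK j'
        · simpa using (hdisjK j).symm
        · have hjj : j ≠ j' := fun h => hne (congrArg Fin.succ h)
          simpa using hc'disj j j' hjj
      · ext x
        simp only [Set.mem_iUnion, Fin.exists_fin_succ, Fin.cons_zero, Fin.cons_succ]
        constructor
        · intro hxS
          by_cases hxK : x ∈ K
          · exact Or.inl hxK
          · have : x ∈ ⋃ j, c' j := hc'cover ▸ ⟨hxS, hxK⟩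
            simpa using Or.inr (by simpa using this)
        · rintro (hxK | ⟨j, hj⟩)
          · exact hKS hxK
          · exact (hc'sub j hj).1
    · -- Case B: a is incomparable with all amax i
      push_neg at hcase
      have hACstar : IsAC (insert a (Set.range amax)) := by
        rintro x (rfl | ⟨i, rfl⟩) y (rfl | ⟨j, rfl⟩) hlt
        · exact lt_irrefl _ hlt
        · exact hnot_a_le j hlt.le
        · exact hcase i hlt.le
        · exact hkey i j hlt
      have hstarS : insert a (Set.range amax) ⊆ S := by
        rintro x (rfl | ⟨i, rfl⟩)
        · exact haS
        · exact hS'S (hamaxS' i)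
      have hamaxinj : Function.Injective amax := by
        intro i j hij
        by_contra hne
        exact Set.disjoint_left.1 (hCdisj i j hne) (hamaxC i) (hij ▸ hamaxC j)
      have hcardstar : (insert a (Set.range amax)).ncard = k + 1 := by
        rw [Set.ncard_insert_of_notMem (fun h => by
          obtain ⟨i, hi⟩ := h
          exact (hamaxS' i).2 (by rw [hi]; rfl)) (Set.toFinite _)]
        rw [← Set.image_univ, Set.ncard_image_of_injective _ hamaxinj, Set.ncard_univ]
        simp
      have hk1M : k + 1 ≤ M := by
        have := hanti _ hstarS hACstar
        omega
      refine pad_chains S hk1M (Fin.cons {a} C) ?_ ?_ ?_ ?_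
      · intro m
        refine Fin.cases ?_ ?_ m
        · exact Set.Subsingleton.isChain (Set.subsingleton_singleton)
        · intro j; simpa using hCchain j
      · intro m
        refine Fin.cases ?_ ?_ m
        · simpa using haS
        · intro j; simpa using (hCsub j).trans hS'S
      · intro m m' hne
        have hdisja : ∀ j, Disjoint ({a} : Set P) (C j) := by
          intro j
          rw [Set.disjoint_left]
          rintro x rfl hx
          exact (hCsub j hx).2 rfl
        rcases Fin.eq_zero_or_eq_succ m with rfl | ⟨j, rfl⟩ <;>
          rcases Fin.eq_zero_or_eq_succ m' with rfl | ⟨j', rfl⟩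
        · exact absurd rfl hne
        · simpa using hdisja j'
        · simpa using (hdisja j).symm
        · have hjj : j ≠ j' := fun h => hne (congrArg Fin.succ h)
          simpa using hCdisj j j' hjj
      · ext x
        simp only [Set.mem_iUnion, Fin.exists_fin_succ, Fin.cons_zero, Fin.cons_succ,
          Set.mem_singleton_iff]
        constructor
        · intro hxS
          rcases eq_or_ne x a with rfl | hxa
          · exact Or.inl rfl
          · have : x ∈ ⋃ j, C j := hCcover ▸ ⟨hxS, hxa⟩
            exact Or.inr (by simpa using this)
        · rintro (rfl | ⟨j, hj⟩)
          · exact haS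
          · exact hS'S (hCsub j hj)

lemma chain_cover (f : P → ZMod 2) (t : ZMod 2) :
    ∀ (m : ℕ) (C : Set P), C.Finite → IsChain (· ≤ ·) C → C.Nonempty → C ⊆ f ⁻¹' {t} →
    (∃ (nn : ℕ) (_ : nn ≤ m) (a b : Fin nn → P),
       (∀ j, Set.Icc (a j) (b j) ⊆ f ⁻¹' {t}) ∧ C ⊆ ⋃ j, Set.Icc (a j) (b j)) ∨
    (∃ z : ℕ → P, (∀ i < 2 * m, z i < z (i + 1) ∧ f (z i) ≠ f (z (i + 1))) ∧
       z (2 * m) ∈ C ∧ ∀ x ∈ C, x ≤ z (2 * m)) := by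
  intro m
  induction m with
  | zero =>
    intro C hfin hchain hne hsub
    obtain ⟨g, hg, hgtop⟩ := chain_greatest hchain hne hfin
    exact Or.inr ⟨fun _ => g, fun i hi => absurd hi (by omega), hg, hgtop⟩
  | succ m IH =>
    intro C hfin hchain hne hsub
    obtain ⟨M0, hM0C, hM0top⟩ := chain_greatest hchain hne hfin
    set A : Set P := {x | x ∈ C ∧ Set.Icc x M0 ⊆ f ⁻¹' {t}} with hAdef
    have hAne : A.Nonempty := by
      refine ⟨M0, hM0C, ?_⟩
      rw [Set.Icc_self]
      rintro x rfl
      exact hsub hM0C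
    have hAchain : IsChain (· ≤ ·) A := hchain.mono (fun x hx => hx.1)
    obtain ⟨a0, ha0A, ha0bot⟩ := chain_least hAchain hAne (hfin.subset (fun x hx => hx.1))
    set C' : Set P := {x | x ∈ C ∧ ¬ a0 ≤ x} with hC'def
    have hIccsub : Set.Icc a0 M0 ⊆ f ⁻¹' {t} := ha0A.2
    have hcov : ∀ x ∈ C, a0 ≤ x → x ∈ Set.Icc a0 M0 := fun x hx h => ⟨h, hM0top x hx⟩
    rcases C'.eq_empty_or_nonempty with hC'e | hC'ne
    · -- single interval suffices
      refine Or.inl ⟨1, by omega, fun _ => a0, fun _ => M0, fun _ => hIccsub, ?_⟩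
      intro x hx
      have hax : a0 ≤ x := by
        by_contra h
        have hxC' : x ∈ C' := ⟨hx, h⟩
        rw [hC'e] at hxC'
        exact hxC'
      exact Set.mem_iUnion.2 ⟨0, hcov x hx hax⟩
    · have hC'sub : C' ⊆ C := fun x hx => hx.1
      rcases IH C' (hfin.subset hC'sub) (hchain.mono hC'sub) hC'ne
        (fun x hx => hsub (hC'sub hx)) with ⟨nn, hnn, a, b, hIcc, hcover⟩ | ⟨z, hz, hzC, hztop⟩
      · -- prepend the top interval
        refine Or.inl ⟨nn + 1, by omega, Fin.cons a0 a, Fin.cons M0 b, ?_, ?_⟩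
        · intro j
          refine Fin.cases ?_ ?_ j
          · simpa using hIccsub
          · intro j'; simpa using hIcc j'
        · intro x hx
          by_cases hax : a0 ≤ x
          · exact Set.mem_iUnion.2 ⟨0, by simpa using hcov x hx hax⟩
          · obtain ⟨j, hj⟩ := Set.mem_iUnion.1 (hcover ⟨hx, hax⟩)
            exact Set.mem_iUnion.2 ⟨j.succ, by simpa using hj⟩
      · -- extend the alternating sequence
        set b0 : P := z (2 * m) with hb0def
        have hb0C' : b0 ∈ C' := hzC
        have hb0C : b0 ∈ C := hb0C'.1
        have hb0notA : b0 ∉ A := fun h => hb0C'.2 (ha0bot b0 h)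
        have hnsub : ¬ Set.Icc b0 M0 ⊆ f ⁻¹' {t} := fun h => hb0notA ⟨hb0C, h⟩
        obtain ⟨y, hyIcc, hyt⟩ := Set.not_subset.1 hnsub
        simp only [Set.mem_preimage, Set.mem_singleton_iff] at hyt
        have hfb0 : f b0 = t := hsub hb0C
        have hfM0 : f M0 = t := hsub hM0C
        have hb0y : b0 < y := lt_of_le_of_ne hyIcc.1 (fun h => hyt (h ▸ hfb0))
        have hyM0 : y < M0 := lt_of_le_of_ne hyIcc.2 (fun h => hyt (h ▸ hfM0))
        refine Or.inr ⟨fun i => if i ≤ 2 * m then z i else if i = 2 * m + 1 then y else M0,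
          ?_, ?_, ?_⟩
        · intro i hi
          rcases lt_trichotomy i (2 * m) with h | rfl | h
          · have h1 : i ≤ 2 * m := le_of_lt h
            have h2 : i + 1 ≤ 2 * m := h
            simp only [if_pos h1, if_pos h2]
            exact hz i h
          · have h1 : 2 * m ≤ 2 * m := le_refl _
            have h2 : ¬ (2 * m + 1 ≤ 2 * m) := by omega
            simp only [if_pos h1, if_neg h2, if_pos rfl]
            exact ⟨hb0y, fun h => hyt (h.symm.trans hfb0)⟩
          · have h1 : i = 2 * m + 1 := by omega
            subst h1
            have h2 : ¬ (2 * m + 1 ≤ 2 * m) := by omega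
            have h3 : ¬ (2 * m + 1 + 1 ≤ 2 * m) := by omega
            have h4 : ¬ (2 * m + 1 + 1 = 2 * m + 1) := by omega
            simp only [if_neg h2, if_pos rfl, if_neg h3, if_neg h4]
            exact ⟨hyM0, fun h => hyt (h.trans hfM0)⟩
        · have h2 : ¬ (2 * (m + 1) ≤ 2 * m) := by omega
          have h4 : ¬ (2 * (m + 1) = 2 * m + 1) := by omega
          simp only [if_neg h2, if_neg h4]
          exact hM0C
        · intro x hx
          have h2 : ¬ (2 * (m + 1) ≤ 2 * m) := by omega
          have h4 : ¬ (2 * (m + 1) = 2 * m + 1) := by omega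
          simp only [if_neg h2, if_neg h4]
          exact hM0top x hx

/-- If every antichain of a subset `S` of a finite poset `P` has size at most
`M = (2N+1)(N+1)`, then `S` is a union of at most `M` chains; consequently, if moreover
`f` is an `N`-indiscernible coloring of `P` and `S ⊆ f⁻¹(t)`, then `S` is covered by at
most `M(N+1)` closed intervals of `P` each contained in `f⁻¹(t)`. -/
theorem stmt_15 [Fintype P] (N : ℕ) (f : P → ZMod 2) (hf : IsIndiscColoring N f)
    (t : ZMod 2) (S : Set P) (hSt : S ⊆ f ⁻¹' {t})
    (hanti : ∀ A ⊆ S, IsAC A → A.ncard ≤ (2 * N + 1) * (N + 1)) :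
    (∃ c : Fin ((2 * N + 1) * (N + 1)) → Set P,
      (∀ m, IsChain (· ≤ ·) (c m)) ∧ S = ⋃ m, c m) ∧
    ∃ k ≤ (2 * N + 1) * (N + 1) * (N + 1), ∃ a b : Fin k → P,
      (∀ m, Set.Icc (a m) (b m) ⊆ f ⁻¹' {t}) ∧ S ⊆ ⋃ m, Set.Icc (a m) (b m) := by
  obtain ⟨c, hcchain, hcsub, hcdisj, hccover⟩ :=
    dilworth S.ncard S le_rfl ((2 * N + 1) * (N + 1)) hanti
  refine ⟨⟨c, hcchain, hccover⟩, ?_⟩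
  rcases S.eq_empty_or_nonempty with rfl | ⟨s0, hs0⟩
  · exact ⟨0, Nat.zero_le _, Fin.elim0, Fin.elim0, fun m => m.elim0, by simp⟩
  have hfs0 : f s0 = t := hSt hs0
  have hcv : ∀ m : Fin ((2 * N + 1) * (N + 1)), ∃ a b : Fin (N + 1) → P,
      (∀ j, Set.Icc (a j) (b j) ⊆ f ⁻¹' {t}) ∧ c m ⊆ ⋃ j, Set.Icc (a j) (b j) := by
    intro m
    rcases (c m).eq_empty_or_nonempty with he | hne
    · refine ⟨fun _ => s0, fun _ => s0, fun j => ?_, by rw [he]; exact Set.empty_subset _⟩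
      rw [Set.Icc_self]; rintro x rfl; simpa using hfs0
    rcases chain_cover f t (N + 1) (c m) (Set.toFinite _) (hcchain m) hne
      ((hcsub m).trans hSt) with ⟨nn, hnn, a, b, hIcc, hcover⟩ | ⟨z, hz, -, -⟩
    · refine ⟨fun j => if h : (j : ℕ) < nn then a ⟨j, h⟩ else s0,
              fun j => if h : (j : ℕ) < nn then b ⟨j, h⟩ else s0, ?_, ?_⟩
      · intro j
        show Set.Icc (if h : (j : ℕ) < nn then a ⟨j, h⟩ else s0)
          (if h : (j : ℕ) < nn then b ⟨j, h⟩ else s0) ⊆ f ⁻¹' {t}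
        split
        · exact hIcc _
        · rw [Set.Icc_self]; rintro x rfl; simpa using hfs0
      · intro x hx
        obtain ⟨i, hi⟩ := Set.mem_iUnion.1 (hcover hx)
        refine Set.mem_iUnion.2 ⟨⟨i, lt_of_lt_of_le i.2 hnn⟩, ?_⟩
        simpa [i.2] using hi
    · exact absurd ⟨z, fun ℓ hℓ => (hz ℓ (by omega)).1, fun ℓ hℓ => (hz ℓ (by omega)).2⟩ hf.2
  choose A B hAB1 hAB2 using hcv
  refine ⟨(2 * N + 1) * (N + 1) * (N + 1), le_rfl,
    fun p => A (finProdFinEquiv.symm p).1 (finProdFinEquiv.symm p).2,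
    fun p => B (finProdFinEquiv.symm p).1 (finProdFinEquiv.symm p).2,
    fun p => hAB1 _ _, ?_⟩
  intro x hx
  rw [hccover] at hx
  obtain ⟨m, hm⟩ := Set.mem_iUnion.1 hx
  obtain ⟨j, hj⟩ := Set.mem_iUnion.1 (hAB2 m hm)
  refine Set.mem_iUnion.2 ⟨finProdFinEquiv (m, j), ?_⟩
  simpa [Equiv.symm_apply_apply] using hj
end

section
/- Let (P, ⊴) be a finite partial order, f an N-indiscernible coloring, t ∈ {0,1}, and let A, A' be antichains with A ⊆ f⁻¹(1−t), A' ⊆ f⁻¹(t), |A| > (2N+1)(N+1), |A'| > (2N+1)(N+1), and every element of A strictly below every element of a fixed maximal antichain A* while every element of A' is weakly above A*. Then there exist i ∈ A and i' ∈ A' with i ◁ i'. -/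
variable {P : Type*} [PartialOrder P]

/-- The comparability step of Lemma 3.9: two large monochromatic antichains of opposite
colors, one strictly below and one weakly above a fixed maximal antichain, contain a
comparable pair. -/
theorem stmt_17 [Fintype P] (N : ℕ) (f : P → ZMod 2) (hf : IsIndiscColoring N f)
    (t : ZMod 2) (A A' Astar : Set P)
    (hA : IsAC A) (hA' : IsAC A') (hAstar : IsMaxAC Astar)
    (hAcol : A ⊆ f ⁻¹' {1 - t}) (hA'col : A' ⊆ f ⁻¹' {t})
    (hAcard : (2 * N + 1) * (N + 1) < A.ncard)
    (hA'card : (2 * N + 1) * (N + 1) < A'.ncard)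
    (hbelow : ∀ i ∈ A, ∃ k ∈ Astar, i < k)
    (habove : ∀ i' ∈ A', i' ∈ Astar ∨ ∃ k ∈ Astar, k < i') :
    ∃ i ∈ A, ∃ i' ∈ A', i < i' := by

  have hNle : N < (2 * N + 1) * (N + 1) := by nlinarith
  have hnac : ¬ IsAC (A ∪ A') := by
    intro hac
    obtain ⟨t', ht'⟩ := hf.1 (A ∪ A') hac
    have hcases : t' = t ∨ t' = 1 - t := (by decide : ∀ a b : ZMod 2, a = b ∨ a = 1 - b) t' t
    rcases hcases with h | h
    · have hsub : A' ⊆ (A ∪ A') ∩ f ⁻¹' {t'} := fun x hx =>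
        ⟨Or.inr hx, by simpa [h] using hA'col hx⟩
      have := Set.ncard_le_ncard hsub (Set.toFinite _)
      omega
    · have hsub : A ⊆ (A ∪ A') ∩ f ⁻¹' {t'} := fun x hx =>
        ⟨Or.inl hx, by simpa [h] using hAcol hx⟩
      have := Set.ncard_le_ncard hsub (Set.toFinite _)
      omega
  simp only [IsAC, not_forall] at hnac
  obtain ⟨i, hi, j, hj, hij⟩ := hnac
  rw [not_not] at hij
  rcases hi with hi | hi <;> rcases hj with hj | hj
  · exact absurd hij (hA i hi j hj)
  · exact ⟨i, hi, j, hj, hij⟩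
  · -- i ∈ A', j ∈ A: contradiction with Astar
    exfalso
    obtain ⟨k, hk, hjk⟩ := hbelow j hj
    rcases habove i hi with hik | ⟨k', hk', hk'i⟩
    · exact hAstar.1 i hik k hk (hij.trans hjk)
    · exact hAstar.1 k' hk' k hk (hk'i.trans (hij.trans hjk))
  · exact absurd hij (hA' i hi j hj)
end

section
/- Let (P, ⊴) be a finite partial order, f an N-indiscernible coloring, t ∈ {0,1}, and suppose for contradiction that there are maximal antichains A₀ ◁ A₁ ◁ ... ◁ A_{2N+1} of P such that each A_n contains a subset A*_n of elements of color n mod 2 with the property that every element of A*_n (n ≥ 1) lies strictly above some element of A*_{n-1}, and A*_{2N+1} is nonempty. Then there is a chain i₀ ◁ i₁ ◁ ... ◁ i_{2N+1} with f(i_ℓ) ≡ ℓ (mod 2) for all ℓ, contradicting condition (ii) of N-indiscernible colorings. Hence no such tower of 2N+2 antichains exists. -/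
variable {P : Type*} [PartialOrder P]

/-- The termination argument of Lemma 2.9: there is no tower of `2N+2` maximal antichains
`A 0 ◁ ... ◁ A (2N+1)` carrying subsets `A* n` of color `n mod 2` such that every element
of `A* n` (for `n ≥ 1`) lies strictly above some element of `A* (n-1)` and `A* (2N+1)` is
nonempty; otherwise one extracts a chain alternating colors at every step. -/
theorem stmt_18 [Fintype P] (N : ℕ) (f : P → ZMod 2) (hf : IsIndiscColoring N f) :
    ¬ ∃ A Astar : ℕ → Set P,
      (∀ n ≤ 2 * N + 1, IsMaxAC (A n)) ∧
      (∀ n, n + 1 ≤ 2 * N + 1 →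
        A n ⊆ dcl (A (n + 1)) ∪ A (n + 1) ∧ A n ≠ A (n + 1)) ∧
      (∀ n ≤ 2 * N + 1, Astar n ⊆ A n ∧ ∀ i ∈ Astar n, f i = (n : ZMod 2)) ∧
      (∀ n, 1 ≤ n → n ≤ 2 * N + 1 → ∀ i ∈ Astar n, ∃ i' ∈ Astar (n - 1), i' < i) ∧
      (Astar (2 * N + 1)).Nonempty := by

  rintro ⟨A, Astar, -, -, hcol, hdown, ⟨x, hx⟩⟩
  set M := 2 * N + 1 with hM
  -- Build a chain g with g ℓ ∈ Astar ℓ for all ℓ ≤ M, descending from x.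
  have key : ∀ j, ∃ g : ℕ → P,
      (∀ ℓ, M - j ≤ ℓ → ℓ ≤ M → g ℓ ∈ Astar ℓ) ∧
      (∀ ℓ, M - j ≤ ℓ → ℓ + 1 ≤ M → g ℓ < g (ℓ + 1)) := by
    intro j
    induction j with
    | zero =>
      refine ⟨fun _ => x, fun ℓ h1 h2 => ?_, fun ℓ h1 h2 => ?_⟩
      · simp only [Nat.sub_zero] at h1
        have : ℓ = M := le_antisymm h2 h1
        rw [this]; exact hx
      · simp only [Nat.sub_zero] at h1; omega
    | succ j ih =>
      obtain ⟨g, hg1, hg2⟩ := ih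
      by_cases hj : M - j = 0
      · exact ⟨g, fun ℓ h1 h2 => hg1 ℓ (by omega) h2, fun ℓ h1 h2 => hg2 ℓ (by omega) h2⟩
      · set k := M - (j + 1) with hk
        have hkj : M - j = k + 1 := by omega
        have hmem : g (k + 1) ∈ Astar (k + 1) := hg1 (k + 1) (by omega) (by omega)
        obtain ⟨y, hy, hylt⟩ := hdown (k + 1) (by omega) (by omega) (g (k + 1)) hmem
        simp only [Nat.add_sub_cancel] at hy
        refine ⟨Function.update g k y, fun ℓ h1 h2 => ?_, fun ℓ h1 h2 => ?_⟩
        · rcases eq_or_lt_of_le h1 with h | h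
          · rw [← h, Function.update_self]; exact hy
          · rw [Function.update_of_ne (by omega)]; exact hg1 ℓ (by omega) h2
        · rcases eq_or_lt_of_le h1 with h | h
          · rw [← h, Function.update_self, Function.update_of_ne (by omega)]
            exact hylt
          · rw [Function.update_of_ne (by omega), Function.update_of_ne (by omega)]
            exact hg2 ℓ (by omega) h2
  obtain ⟨g, hg1, hg2⟩ := key M
  apply hf.2
  refine ⟨g, fun ℓ hℓ => hg2 ℓ (by omega) (by omega), fun ℓ hℓ => ?_⟩
  have e1 : f (g ℓ) = (ℓ : ZMod 2) := (hcol ℓ (by omega)).2 _ (hg1 ℓ (by omega) (by omega))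
  have e2 : f (g (ℓ + 1)) = ((ℓ + 1 : ℕ) : ZMod 2) :=
    (hcol (ℓ + 1) (by omega)).2 _ (hg1 (ℓ + 1) (by omega) (by omega))
  rw [e1, e2]
  push_cast
  intro h
  have : (0 : ZMod 2) = 1 := by
    have := left_eq_add.mp h
    exact this.symm
  exact absurd this (by decide)
end

section
/- Let X be the set {0,1,2,3,4} and Y = {{0}, {0,1,2}, {2,3,4}, {4}} ⊆ 𝒫(X), with the membership relation R(x,y) ⟺ x ∈ y between X and Y. Then there is no partial order ⊴ on Y making ⟨y : y ∈ Y⟩ a Δ_{1,R}-indiscernible sequence. (In particular: any such order must make {0} and {0,1,2} comparable, must make {0,1,2} and {2,3,4} incomparable, must make {0} and {4} incomparable, yet the pairs ({0,1,2},{2,3,4}) and ({0},{4}) have different Δ_{1,R}-types since the first pair intersects and the second does not — a contradiction.) -/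
/-- The family `Y = {{0}, {0,1,2}, {2,3,4}, {4}}` of subsets of `X = {0,1,2,3,4}`. -/
def Ysets : Fin 4 → Set (Fin 5)
  | 0 => {0}
  | 1 => {0, 1, 2}
  | 2 => {2, 3, 4}
  | 3 => {4}

set_option maxHeartbeats 1000000 in
/-- Example 4.1: there is no partial order `⊴` on `Y` making `⟨y : y ∈ Y⟩` a
`Δ_{1,R}`-indiscernible sequence, where `R(x,y) ⟺ x ∈ y`: Δ-indiscernibility requires
pairs of distinct indices with the same quantifier-free order type to realize the same
formulas `∃x (R(x,z₀)^{s(0)} ∧ R(x,z₁)^{s(1)})`. -/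
theorem stmt_19 :
    ¬ ∃ le : Fin 4 → Fin 4 → Prop, IsPartialOrder (Fin 4) le ∧
      ∀ i j : Fin 2 → Fin 4, Function.Injective i → Function.Injective j →
        (∀ k l, le (i k) (i l) ↔ le (j k) (j l)) →
        ∀ s : Fin 2 → Bool,
          ((∃ x : Fin 5, ∀ k, (x ∈ Ysets (i k) ↔ s k = true)) ↔
            (∃ x : Fin 5, ∀ k, (x ∈ Ysets (j k) ↔ s k = true))) := by
  rintro ⟨le, hpo, H⟩
  have hrefl : ∀ a, le a a := hpo.refl
  have hanti : ∀ a b, le a b → le b a → a = b := hpo.antisymm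
  -- helper: if two ordered pairs have the same order type, they get the same Δ-type
  have key : ∀ a b c d : Fin 4, a ≠ b → c ≠ d →
      (le a b ↔ le c d) → (le b a ↔ le d c) → ∀ s : Fin 2 → Bool,
      ((∃ x : Fin 5, ∀ k, (x ∈ Ysets (![a,b] k) ↔ s k = true)) ↔
        (∃ x : Fin 5, ∀ k, (x ∈ Ysets (![c,d] k) ↔ s k = true))) := by
    intro a b c d hab hcd h1 h2 s
    apply H ![a,b] ![c,d]
    · intro x y; fin_cases x <;> fin_cases y <;> simp_all <;> tauto
    · intro x y; fin_cases x <;> fin_cases y <;> simp_all <;> tauto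
    · intro k l; fin_cases k <;> fin_cases l <;>
        simp only [Matrix.cons_val_zero, Matrix.cons_val_one, Matrix.head_cons]
      · exact iff_of_true (hrefl a) (hrefl c)
      · exact h1
      · exact h2
      · exact iff_of_true (hrefl b) (hrefl d)
  -- the six Δ-type distinctions among pairs (0,1),(1,0),(0,2),(1,2)
  have d1 : ¬((le 0 1 ↔ le 1 0) ∧ (le 1 0 ↔ le 0 1)) := by
    rintro ⟨h1, h2⟩
    have := key 0 1 1 0 (by decide) (by decide) h1 h2 ![true, false]
    simp [Ysets, Fin.forall_fin_two, Set.mem_insert_iff, Set.mem_singleton_iff] at this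
    all_goals (revert this; decide)
  have d2 : ¬((le 0 1 ↔ le 0 2) ∧ (le 1 0 ↔ le 2 0)) := by
    rintro ⟨h1, h2⟩
    have := key 0 1 0 2 (by decide) (by decide) h1 h2 ![true, true]
    simp [Ysets, Fin.forall_fin_two, Set.mem_insert_iff, Set.mem_singleton_iff] at this
    all_goals (revert this; decide)
  have d3 : ¬((le 0 1 ↔ le 1 2) ∧ (le 1 0 ↔ le 2 1)) := by
    rintro ⟨h1, h2⟩
    have := key 0 1 1 2 (by decide) (by decide) h1 h2 ![false, false]
    simp [Ysets, Fin.forall_fin_two, Set.mem_insert_iff, Set.mem_singleton_iff] at this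
    all_goals (revert this; decide)
  have d4 : ¬((le 1 0 ↔ le 0 2) ∧ (le 0 1 ↔ le 2 0)) := by
    rintro ⟨h1, h2⟩
    have := key 1 0 0 2 (by decide) (by decide) h1 h2 ![true, true]
    simp [Ysets, Fin.forall_fin_two, Set.mem_insert_iff, Set.mem_singleton_iff] at this
    all_goals (revert this; decide)
  have d5 : ¬((le 1 0 ↔ le 1 2) ∧ (le 0 1 ↔ le 2 1)) := by
    rintro ⟨h1, h2⟩
    have := key 1 0 1 2 (by decide) (by decide) h1 h2 ![false, false]
    simp [Ysets, Fin.forall_fin_two, Set.mem_insert_iff, Set.mem_singleton_iff] at this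
    all_goals (revert this; decide)
  have d6 : ¬((le 0 2 ↔ le 1 2) ∧ (le 2 0 ↔ le 2 1)) := by
    rintro ⟨h1, h2⟩
    have := key 0 2 1 2 (by decide) (by decide) h1 h2 ![true, true]
    simp [Ysets, Fin.forall_fin_two, Set.mem_insert_iff, Set.mem_singleton_iff] at this
    all_goals (revert this; decide)
  -- antisymmetry constraints
  have a1 : ¬(le 0 1 ∧ le 1 0) := fun ⟨h, h'⟩ => by simpa using hanti 0 1 h h'
  have a2 : ¬(le 0 2 ∧ le 2 0) := fun ⟨h, h'⟩ => by simpa using hanti 0 2 h h'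
  have a3 : ¬(le 1 2 ∧ le 2 1) := fun ⟨h, h'⟩ => by simpa using hanti 1 2 h h'
  by_cases hp : le 0 1
  · have hq' : ¬ le 1 0 := fun h => a1 ⟨hp, h⟩
    have hr : ¬ le 0 2 := by
      intro hr
      have ht : le 2 0 := by
        by_contra ht
        exact d2 ⟨iff_of_true hp hr, iff_of_false hq' ht⟩
      exact a2 ⟨hr, ht⟩
    have ht : ¬ le 2 0 := fun ht => d4 ⟨iff_of_false hq' hr, iff_of_true hp ht⟩
    have hu : ¬ le 1 2 := by
      intro hu
      have hv : le 2 1 := by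
        by_contra hv
        exact d3 ⟨iff_of_true hp hu, iff_of_false hq' hv⟩
      exact a3 ⟨hu, hv⟩
    have hv : ¬ le 2 1 := fun hv => d5 ⟨iff_of_false hq' hu, iff_of_true hp hv⟩
    exact d6 ⟨iff_of_false hr hu, iff_of_false ht hv⟩
  · have hq' : le 1 0 := by
      by_contra h; exact d1 ⟨iff_of_false hp h, iff_of_false h hp⟩
    have hr : ¬ le 0 2 := by
      intro hr
      have ht : le 2 0 := by
        by_contra ht
        exact d4 ⟨iff_of_true hq' hr, iff_of_false hp ht⟩
      exact a2 ⟨hr, ht⟩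
    have ht : ¬ le 2 0 := fun ht => d2 ⟨iff_of_false hp hr, iff_of_true hq' ht⟩
    have hu : ¬ le 1 2 := by
      intro hu
      have hv : le 2 1 := by
        by_contra hv
        exact d5 ⟨iff_of_true hq' hu, iff_of_false hp hv⟩
      exact a3 ⟨hu, hv⟩
    have hv : ¬ le 2 1 := fun hv => d3 ⟨iff_of_false hp hu, iff_of_true hq' hv⟩
    exact d6 ⟨iff_of_false hr hu, iff_of_false ht hv⟩
end
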